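/- arXiv:2402.04067 — 2 statements merged into one kernel-verified Lean document; each statement's English description precedes it below -/
import Mathlib

section
/- Let n be an even positive integer with prime factorization n = 2 p_1^{J_1} p_2^{J_2} ··· p_s^{J_s}, where s ≥ 2, p_1 < p_2 < ··· < p_s are odd primes, each J_i ≥ 1, and for every r ∈ {1,...,s-1} one has ∏_{i=1}^{r} p_i^{J_i} < p_{r+1}. Let D_1 and D_2 be sets of divisors of n with n ∉ D_1 and n ∉ D_2. If the integral circulant graphs ICG(n,D_1) and ICG(n,D_2) are isospectral, then D_1 = D_2. -/
open Finset

/-- `ω_n = exp(2πi/n)`. -/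
noncomputable def omegaN (n : ℕ) : ℂ := Complex.exp (2 * Real.pi * Complex.I / n)

/-- `λ_k(S) = ∑_{g ∈ S} ω_n^{k g}`, the eigenvalues of the circulant graph `Cay(ℤ_n, S)`. -/
noncomputable def lam (n : ℕ) (S : Finset ℕ) (k : ℕ) : ℂ :=
  ∑ g ∈ S, omegaN n ^ (k * g)

/-- The spectrum of `Cay(ℤ_n, S)`, i.e. the multiset `(λ_k(S))_{k ∈ [n]}`. -/
noncomputable def spec (n : ℕ) (S : Finset ℕ) : Multiset ℂ :=
  (Finset.Icc 1 n).val.map (lam n S)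

/-- The connection set of `ICG(n, D)`:
`⋃_{d ∈ D} G_n(d) = {j ∈ [n] : gcd(j,n) ∈ D}` where `G_n(d) = {j ∈ [n] : gcd(j,n) = d}`. -/
def connSet (n : ℕ) (D : Finset ℕ) : Finset ℕ :=
  (Finset.Icc 1 n).filter (fun j => Nat.gcd j n ∈ D)

lemma omegaN_pow_n {n : ℕ} (hn : n ≠ 0) : omegaN n ^ n = 1 := by
  rw [omegaN, ← Complex.exp_nat_mul]
  have h : (n:ℂ) ≠ 0 := Nat.cast_ne_zero.mpr hn
  rw [show (n:ℂ) * (2 * Real.pi * Complex.I / n) = 2 * Real.pi * Complex.I by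
    field_simp]
  exact Complex.exp_two_pi_mul_I

lemma omegaN_half {n : ℕ} (h2 : 2 ∣ n) (hn : n ≠ 0) : omegaN n ^ (n / 2) = -1 := by
  obtain ⟨m, rfl⟩ := h2
  have hm : (m:ℂ) ≠ 0 := by
    simpa using fun h => hn (by simp [h])
  rw [omegaN, ← Complex.exp_nat_mul, Nat.mul_div_cancel_left _ (by norm_num)]
  rw [show (m:ℂ) * (2 * Real.pi * Complex.I / ((2*m : ℕ):ℂ)) = Real.pi * Complex.I by
    push_cast; field_simp]
  exact Complex.exp_pi_mul_I

lemma abs_omegaN {n : ℕ} : ‖omegaN n‖ = 1 := by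
  have : (2 * (Real.pi:ℂ) * Complex.I / n) = Complex.I * ((2*Real.pi/n : ℝ):ℂ) := by
    push_cast; ring
  rw [omegaN, this, Complex.norm_exp]
  simp

lemma lam_top {n : ℕ} (hn : n ≠ 0) (S : Finset ℕ) : lam n S n = S.card := by
  unfold lam
  rw [Finset.sum_congr rfl (fun g _ => by rw [pow_mul, omegaN_pow_n hn, one_pow])]
  simp

lemma lam_half_eq_sum {n : ℕ} (h2 : 2 ∣ n) (hn : n ≠ 0) (S : Finset ℕ) :
    lam n S (n / 2) = ∑ g ∈ S, (-1 : ℂ) ^ g := by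
  unfold lam
  exact Finset.sum_congr rfl (fun g _ => by rw [pow_mul, omegaN_half h2 hn])

/-- fiber cardinality -/
lemma card_gcd_fiber {n d : ℕ} (hn : n ≠ 0) (hd : d ∣ n) :
    ((Finset.Icc 1 n).filter (fun j => Nat.gcd j n = d)).card = Nat.totient (n / d) := by
  rw [Nat.totient_div_of_dvd hd]
  apply Finset.card_bij' (fun j _ => j % n) (fun k _ => if k = 0 then n else k)
  · intro j hj
    simp only [Finset.mem_filter, Finset.mem_Icc] at hj ⊢
    obtain ⟨⟨h1, h2⟩, h3⟩ := hj
    refine ⟨Finset.mem_range.mpr (Nat.mod_lt _ (Nat.pos_of_ne_zero hn)), ?_⟩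
    rcases eq_or_lt_of_le h2 with rfl | hlt
    · rw [Nat.mod_self, Nat.gcd_zero_right]
      rw [Nat.gcd_self] at h3; exact h3
    · rw [Nat.mod_eq_of_lt hlt, Nat.gcd_comm]; exact h3
  · intro k hk
    simp only [Finset.mem_filter, Finset.mem_range] at hk
    obtain ⟨h1, h2⟩ := hk
    by_cases h0 : k = 0
    · subst h0
      simp only [if_pos rfl, Finset.mem_filter, Finset.mem_Icc]
      rw [Nat.gcd_zero_right] at h2
      refine ⟨⟨Nat.one_le_iff_ne_zero.mpr hn, le_refl n⟩, ?_⟩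
      simp [Nat.gcd_self, h2]
    · simp only [if_neg h0, Finset.mem_filter, Finset.mem_Icc]
      exact ⟨⟨Nat.one_le_iff_ne_zero.mpr h0, le_of_lt h1⟩, by rw [Nat.gcd_comm]; exact h2⟩
  · intro j hj
    simp only [Finset.mem_filter, Finset.mem_Icc] at hj
    obtain ⟨⟨h1, h2⟩, _⟩ := hj
    rcases eq_or_lt_of_le h2 with rfl | hlt
    · simp [Nat.mod_self]
    · rw [Nat.mod_eq_of_lt hlt, if_neg (by omega)]
  · intro k hk
    simp only [Finset.mem_filter, Finset.mem_range] at hk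
    by_cases h0 : k = 0
    · simp [h0, Nat.mod_self]
    · rw [if_neg h0]
      exact Nat.mod_eq_of_lt hk.1

lemma connSet_eq_biUnion (n : ℕ) (D : Finset ℕ) :
    connSet n D = D.biUnion (fun d => (Finset.Icc 1 n).filter (fun j => Nat.gcd j n = d)) := by
  ext j
  simp only [connSet, Finset.mem_filter, Finset.mem_biUnion]
  constructor
  · rintro ⟨h1, h2⟩; exact ⟨_, h2, ⟨h1, rfl⟩⟩
  · rintro ⟨d, hd, hj⟩
    exact ⟨hj.1, hj.2 ▸ hd⟩

lemma fiber_disjoint (n : ℕ) : ∀ (x : ℕ), x ∈ (D : Finset ℕ) → ∀ (y : ℕ), y ∈ D → x ≠ y →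
    Disjoint ((Finset.Icc 1 n).filter (fun j => Nat.gcd j n = x))
      ((Finset.Icc 1 n).filter (fun j => Nat.gcd j n = y)) := by
  intro x _ y _ hxy
  apply Finset.disjoint_filter_filter'
  rw [disjoint_iff_inf_le]
  intro j hj
  simp only [Pi.inf_apply, inf_Prop_eq] at hj
  exact absurd (hj.1 ▸ hj.2) hxy

lemma sum_connSet {n : ℕ} (D : Finset ℕ) (f : ℕ → ℂ) :
    ∑ g ∈ connSet n D, f g
      = ∑ d ∈ D, ∑ g ∈ (Finset.Icc 1 n).filter (fun j => Nat.gcd j n = d), f g := by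
  rw [connSet_eq_biUnion, Finset.sum_biUnion]
  exact fiber_disjoint n

lemma card_connSet {n : ℕ} (hn : n ≠ 0) {D : Finset ℕ} (hD : D ⊆ n.divisors) :
    (connSet n D).card = ∑ d ∈ D, Nat.totient (n / d) := by
  rw [connSet_eq_biUnion, Finset.card_biUnion (fiber_disjoint n)]
  exact Finset.sum_congr rfl fun d hd =>
    card_gcd_fiber hn (Nat.dvd_of_mem_divisors (hD hd))

lemma lam_half_value {n : ℕ} (h2 : 2 ∣ n) (hn : n ≠ 0) {D : Finset ℕ}
    (hD : D ⊆ n.divisors) :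
    lam n (connSet n D) (n / 2)
      = (∑ d ∈ D.filter (fun d => Even d), (Nat.totient (n / d) : ℂ))
        - ∑ d ∈ D.filter (fun d => ¬ Even d), (Nat.totient (n / d) : ℂ) := by
  rw [lam_half_eq_sum h2 hn, sum_connSet]
  have hfib : ∀ d ∈ D, ∑ g ∈ (Finset.Icc 1 n).filter (fun j => Nat.gcd j n = d), (-1 : ℂ) ^ g
      = (if Even d then 1 else -1) * (Nat.totient (n / d) : ℂ) := by
    intro d hd
    have hsign : ∀ g ∈ (Finset.Icc 1 n).filter (fun j => Nat.gcd j n = d),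
        (-1 : ℂ) ^ g = (if Even d then 1 else -1) := by
      intro g hg
      rw [Finset.mem_filter] at hg
      by_cases he : Even d
      · rw [if_pos he]
        have : Even g := by
          have hdg : d ∣ g := hg.2 ▸ Nat.gcd_dvd_left g n
          exact (even_iff_two_dvd.mpr (dvd_trans (even_iff_two_dvd.mp he) hdg))
        exact this.neg_one_pow
      · rw [if_neg he]
        have : ¬ Even g := by
          intro hEg
          apply he
          rw [even_iff_two_dvd] at hEg ⊢
          exact hg.2 ▸ Nat.dvd_gcd hEg h2
        exact (Nat.not_even_iff_odd.mp this).neg_one_pow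
    rw [Finset.sum_congr rfl hsign, Finset.sum_const,
      card_gcd_fiber hn (Nat.dvd_of_mem_divisors (hD hd)), nsmul_eq_mul, mul_comm]
  rw [Finset.sum_congr rfl hfib]
  rw [← Finset.sum_filter_add_sum_filter_not D (fun d => Even d)
    (fun d => (if Even d then (1:ℂ) else -1) * (Nat.totient (n / d) : ℂ))]
  have h1 : ∑ d ∈ D.filter (fun d => Even d),
      (if Even d then (1:ℂ) else -1) * (Nat.totient (n / d) : ℂ)
      = ∑ d ∈ D.filter (fun d => Even d), (Nat.totient (n / d) : ℂ) :=
    Finset.sum_congr rfl fun d hd => by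
      rw [if_pos (Finset.mem_filter.mp hd).2, one_mul]
  have h2 : ∑ d ∈ D.filter (fun d => ¬ Even d),
      (if Even d then (1:ℂ) else -1) * (Nat.totient (n / d) : ℂ)
      = -∑ d ∈ D.filter (fun d => ¬ Even d), (Nat.totient (n / d) : ℂ) := by
    rw [← Finset.sum_neg_distrib]
    exact Finset.sum_congr rfl fun d hd => by
      rw [if_neg (Finset.mem_filter.mp hd).2, neg_one_mul]
  rw [h1, h2]
  ring

lemma omegaN_ne_zero (n : ℕ) : omegaN n ≠ 0 := Complex.exp_ne_zero _

lemma mem_connSet_symm {n : ℕ} {D : Finset ℕ} (hnD : n ∉ D) {g : ℕ}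
    (hg : g ∈ connSet n D) : n - g ∈ connSet n D ∧ 1 ≤ g ∧ g < n := by
  simp only [connSet, Finset.mem_filter, Finset.mem_Icc] at hg ⊢
  obtain ⟨⟨h1, h2⟩, h3⟩ := hg
  have hgn : g ≠ n := by
    rintro rfl
    rw [Nat.gcd_self] at h3
    exact hnD h3
  have hlt : g < n := lt_of_le_of_ne h2 hgn
  have hgcd : Nat.gcd (n - g) n = Nat.gcd g n := by
    obtain ⟨a, ha⟩ : ∃ a, a = n - g := ⟨n - g, rfl⟩
    rw [← ha, show n = a + g by omega, Nat.gcd_self_add_right,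
      Nat.gcd_add_self_right, Nat.gcd_comm]
  exact ⟨⟨⟨by omega, by omega⟩, hgcd ▸ h3⟩, h1, hlt⟩

lemma lam_sub {n k : ℕ} (hn : n ≠ 0) {D : Finset ℕ} (hnD : n ∉ D) (hk : k ≤ n) :
    lam n (connSet n D) (n - k) = lam n (connSet n D) k := by
  unfold lam
  apply Finset.sum_nbij' (fun g => n - g) (fun g => n - g)
  · intro g hg; exact (mem_connSet_symm hnD hg).1
  · intro g hg; exact (mem_connSet_symm hnD hg).1
  · intro g hg
    have := (mem_connSet_symm hnD hg).2
    omega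
  · intro g hg
    have := (mem_connSet_symm hnD hg).2
    omega
  · intro g hg
    have hgn : g ≤ n := le_of_lt (mem_connSet_symm hnD hg).2.2
    have hc : omegaN n ^ (k * g) ≠ 0 := pow_ne_zero _ (omegaN_ne_zero n)
    have e1 : omegaN n ^ ((n - k) * g) * omegaN n ^ (k * g) = 1 := by
      rw [← pow_add, ← Nat.add_mul, Nat.sub_add_cancel hk, pow_mul,
        omegaN_pow_n hn, one_pow]
    have e2 : omegaN n ^ (k * (n - g)) * omegaN n ^ (k * g) = 1 := by
      rw [← pow_add, ← Nat.mul_add, Nat.sub_add_cancel hgn, mul_comm k n, pow_mul,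
        omegaN_pow_n hn, one_pow]
    exact mul_right_cancel₀ hc (e1.trans e2.symm)

lemma count_spec (n : ℕ) (S : Finset ℕ) (v : ℂ) :
    Multiset.count v (spec n S)
      = ((Finset.Icc 1 n).filter (fun k => v = lam n S k)).card := by
  rw [spec, Multiset.count_map]
  rfl

lemma count_spec_parity {n : ℕ} (h2 : 2 ∣ n) (hn : n ≠ 0) {D : Finset ℕ}
    (hnD : n ∉ D) (v : ℂ) :
    ((Multiset.count v (spec n (connSet n D))) : ZMod 2)
      = (if v = lam n (connSet n D) (n / 2) then 1 else 0)
        + (if v = lam n (connSet n D) n then 1 else 0) := by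
  have hn2 : 2 ≤ n := (Nat.two_le_iff n).mpr ⟨hn, by rintro rfl; exact absurd h2 (by norm_num)⟩
  set S := connSet n D with hS
  set f : ℕ → ZMod 2 := fun k => if v = lam n S k then 1 else 0 with hf
  have hcast : ((Multiset.count v (spec n S)) : ZMod 2) = ∑ k ∈ Finset.Icc 1 n, f k := by
    rw [count_spec, Finset.card_filter, Nat.cast_sum]
    exact Finset.sum_congr rfl fun k _ => by
      by_cases h : v = lam n S k <;> simp [h, hf]
  rw [hcast]
  have hmemn : n ∈ Finset.Icc 1 n := Finset.mem_Icc.mpr ⟨by omega, le_refl n⟩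
  have hmemh : n / 2 ∈ (Finset.Icc 1 n).erase n := by
    rw [Finset.mem_erase, Finset.mem_Icc]
    omega
  rw [← Finset.sum_erase_add _ _ hmemn, ← Finset.sum_erase_add _ _ hmemh]
  have hzero : ∑ k ∈ ((Finset.Icc 1 n).erase n).erase (n / 2), f k = 0 := by
    apply Finset.sum_involution (fun k _ => n - k)
    · intro k hk
      simp only [Finset.mem_erase, Finset.mem_Icc] at hk
      have hlam : lam n S (n - k) = lam n S k := lam_sub hn hnD (by omega)
      have heq : f (n - k) = f k := by simp only [hf, hlam]
      rw [heq]
      have hxx : ∀ x : ZMod 2, x + x = 0 := by decide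
      exact hxx _
    · intro k hk _
      simp only [Finset.mem_erase, Finset.mem_Icc] at hk
      omega
    · intro k hk
      simp only [Finset.mem_erase, Finset.mem_Icc] at hk ⊢
      omega
    · intro k hk
      simp only [Finset.mem_erase, Finset.mem_Icc] at hk
      omega
  rw [hzero, zero_add]

lemma abs_lam_le (n : ℕ) (S : Finset ℕ) (k : ℕ) :
    ‖lam n S k‖ ≤ S.card := by
  unfold lam
  calc ‖∑ g ∈ S, omegaN n ^ (k * g)‖
      ≤ ∑ g ∈ S, ‖omegaN n ^ (k * g)‖ := by
        exact norm_sum_le _ _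
    _ = ∑ g ∈ S, 1 := Finset.sum_congr rfl fun g _ => by
        rw [norm_pow, abs_omegaN, one_pow]
    _ = S.card := by simp

lemma lam_mem_spec {n k : ℕ} (hk : k ∈ Finset.Icc 1 n) (S : Finset ℕ) :
    lam n S k ∈ spec n S :=
  Multiset.mem_map.mpr ⟨k, hk, rfl⟩

lemma card_le_of_spec_eq {n : ℕ} (hn : n ≠ 0) {S₁ S₂ : Finset ℕ}
    (h : spec n S₁ = spec n S₂) : S₁.card ≤ S₂.card := by
  have h1 : lam n S₁ n ∈ spec n S₂ := h ▸ lam_mem_spec (Finset.mem_Icc.mpr ⟨by omega, le_refl n⟩) S₁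
  obtain ⟨k, hk, hlam⟩ := Multiset.mem_map.mp h1
  have : ((S₁.card : ℝ)) ≤ (S₂.card : ℝ) := by
    calc (S₁.card : ℝ) = ‖((S₁.card : ℂ))‖ := by
          rw [Complex.norm_natCast]
      _ = ‖lam n S₂ k‖ := by rw [hlam, lam_top hn]
      _ ≤ S₂.card := abs_lam_le n S₂ k
  exact_mod_cast this

lemma lam_half_eq_of_spec_eq {n : ℕ} (h2 : 2 ∣ n) (hn : n ≠ 0) {D₁ D₂ : Finset ℕ}
    (hnD₁ : n ∉ D₁) (hnD₂ : n ∉ D₂)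
    (h : spec n (connSet n D₁) = spec n (connSet n D₂)) :
    lam n (connSet n D₁) (n / 2) = lam n (connSet n D₂) (n / 2) := by
  have hcard : (connSet n D₁).card = (connSet n D₂).card :=
    le_antisymm (card_le_of_spec_eq hn h) (card_le_of_spec_eq hn h.symm)
  set v := lam n (connSet n D₁) (n / 2) with hv
  have hp1 := count_spec_parity h2 hn hnD₁ v
  have hp2 := count_spec_parity h2 hn hnD₂ v
  rw [h] at hp1
  rw [hp2] at hp1
  rw [lam_top hn, lam_top hn, hcard] at hp1
  -- hp1 : [v = λ₂(n/2)] + [v = c] = [v = λ₁(n/2)] + [v = c]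
  have h1 : (if v = lam n (connSet n D₂) (n / 2) then (1 : ZMod 2) else 0)
      = (if v = v then (1 : ZMod 2) else 0) := by
    exact add_right_cancel hp1
  rw [if_pos rfl] at h1
  by_contra hne
  rw [if_neg hne] at h1
  exact absurd h1 (by decide)

lemma digits_unique (P : ℕ) (hP : 2 ≤ P) : ∀ (K : ℕ) (t u : ℕ → ℕ),
    (∀ j, j < K → t j < P) → (∀ j, j < K → u j < P) →
    (∑ j ∈ Finset.range K, P ^ j * t j) = (∑ j ∈ Finset.range K, P ^ j * u j) →
    ∀ j, j < K → t j = u j := by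
  intro K
  induction K with
  | zero => intro t u _ _ _ j hj; omega
  | succ K ih =>
    intro t u ht hu heq j hj
    have hsplit : ∀ w : ℕ → ℕ, (∑ j ∈ Finset.range (K+1), P ^ j * w j)
        = P * (∑ j ∈ Finset.range K, P ^ j * w (j+1)) + w 0 := by
      intro w
      rw [Finset.sum_range_succ', Finset.mul_sum]
      simp only [pow_succ, pow_zero, one_mul]
      congr 1
      exact Finset.sum_congr rfl fun j _ => by ring
    rw [hsplit t, hsplit u] at heq
    have h0 : t 0 = u 0 := by
      have e1 : (P * (∑ j ∈ Finset.range K, P ^ j * t (j+1)) + t 0) % P = t 0 := by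
        rw [Nat.mul_add_mod]
        exact Nat.mod_eq_of_lt (ht 0 (by omega))
      have e2 : (P * (∑ j ∈ Finset.range K, P ^ j * u (j+1)) + u 0) % P = u 0 := by
        rw [Nat.mul_add_mod]
        exact Nat.mod_eq_of_lt (hu 0 (by omega))
      rw [← e1, ← e2, heq]
    have hT : (∑ j ∈ Finset.range K, P ^ j * t (j+1))
        = ∑ j ∈ Finset.range K, P ^ j * u (j+1) := by
      have := heq
      rw [h0] at this
      have h' : P * (∑ j ∈ Finset.range K, P ^ j * t (j+1))
          = P * (∑ j ∈ Finset.range K, P ^ j * u (j+1)) := by omega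
      exact Nat.eq_of_mul_eq_mul_left (by omega) h'
    match j with
    | 0 => exact h0
    | j + 1 =>
      exact ih (fun i => t (i+1)) (fun i => u (i+1))
        (fun i hi => ht (i+1) (by omega)) (fun i hi => hu (i+1) (by omega)) hT j (by omega)

lemma phi_digits_unique {P : ℕ} (hP : P.Prime) (hodd : Odd P) {M : ℕ}
    (hM : M ≤ P - 2) (K : ℕ) (t u : ℕ → ℕ)
    (ht : ∀ j, j ≤ K → t j ≤ M) (hu : ∀ j, j ≤ K → u j ≤ M)
    (heq : (∑ j ∈ Finset.range (K+1), Nat.totient (P ^ j) * t j)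
      = ∑ j ∈ Finset.range (K+1), Nat.totient (P ^ j) * u j) :
    ∀ j, j ≤ K → t j = u j := by
  have hP3 : 3 ≤ P := by
    rcases hodd with ⟨x, hx⟩
    have := hP.two_le
    omega
  have hsplit : ∀ w : ℕ → ℕ, (∑ j ∈ Finset.range (K+1), Nat.totient (P ^ j) * w j)
      = (P - 1) * (∑ j ∈ Finset.range K, P ^ j * w (j+1)) + w 0 := by
    intro w
    rw [Finset.sum_range_succ', Finset.mul_sum]
    simp only [pow_zero, Nat.totient_one, one_mul]
    congr 1
    refine Finset.sum_congr rfl fun j _ => ?_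
    rw [Nat.totient_prime_pow hP (by omega : 0 < j + 1)]
    simp only [Nat.add_sub_cancel]
    ring
  rw [hsplit t, hsplit u] at heq
  have h0 : t 0 = u 0 := by
    have e1 : ((P-1) * (∑ j ∈ Finset.range K, P ^ j * t (j+1)) + t 0) % (P-1) = t 0 := by
      rw [Nat.mul_add_mod]
      exact Nat.mod_eq_of_lt (by have := ht 0 (by omega); omega)
    have e2 : ((P-1) * (∑ j ∈ Finset.range K, P ^ j * u (j+1)) + u 0) % (P-1) = u 0 := by
      rw [Nat.mul_add_mod]
      exact Nat.mod_eq_of_lt (by have := hu 0 (by omega); omega)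
    rw [← e1, ← e2, heq]
  have hT : (∑ j ∈ Finset.range K, P ^ j * t (j+1))
      = ∑ j ∈ Finset.range K, P ^ j * u (j+1) := by
    rw [h0] at heq
    have h' : (P-1) * (∑ j ∈ Finset.range K, P ^ j * t (j+1))
        = (P-1) * (∑ j ∈ Finset.range K, P ^ j * u (j+1)) := by omega
    exact Nat.eq_of_mul_eq_mul_left (by omega) h'
  intro j hj
  match j with
  | 0 => exact h0
  | j + 1 =>
    exact digits_unique P hP.two_le K (fun i => t (i+1)) (fun i => u (i+1))
      (fun i hi => by have := ht (i+1) (by omega); omega)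
      (fun i hi => by have := hu (i+1) (by omega); omega) hT j (by omega)

/-- Decomposition of a φ-sum over a subset of divisors of `m' * P^K`. -/
lemma phi_sum_decomp {m' P K : ℕ} (hP : P.Prime) (hm' : m' ≠ 0) (hPm' : ¬ P ∣ m')
    (X : Finset ℕ) (hX : X ⊆ (m' * P ^ K).divisors) :
    (∑ d ∈ X, d.totient)
      = ∑ j ∈ Finset.range (K+1), (P ^ j).totient *
          (∑ e ∈ m'.divisors.filter (fun e => P ^ j * e ∈ X), e.totient) := by
  have hm0 : m' * P ^ K ≠ 0 := Nat.mul_ne_zero hm' (pow_ne_zero _ hP.pos.ne')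
  -- rewrite RHS as a sigma sum
  have hco : ∀ {e : ℕ}, e ∣ m' → Nat.Coprime (P ^ K) e → True := fun _ _ => trivial
  rw [Finset.sum_congr rfl (fun j _ => Finset.mul_sum ((m'.divisors.filter
    (fun e => P ^ j * e ∈ X))) (fun e => e.totient) ((P ^ j).totient)), Finset.sum_sigma']
  apply Finset.sum_nbij' (i := fun d => (⟨d.factorization P, ordCompl[P] d⟩ : (_ : ℕ) × ℕ))
    (j := fun σ => P ^ σ.1 * σ.2)
  · intro d hd
    have hdvd : d ∣ m' * P ^ K := Nat.dvd_of_mem_divisors (hX hd)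
    have hd0 : d ≠ 0 := (Nat.pos_of_mem_divisors (hX hd)).ne'
    have hvK : d.factorization P ≤ K := by
      have h1 : P ^ d.factorization P ∣ m' * P ^ K := dvd_trans (Nat.ordProj_dvd d P) hdvd
      have h2 : Nat.Coprime (P ^ d.factorization P) m' :=
        Nat.Coprime.pow_left _ ((hP.coprime_iff_not_dvd).mpr hPm')
      have h3 : P ^ d.factorization P ∣ P ^ K := h2.dvd_of_dvd_mul_left h1
      exact (Nat.pow_dvd_pow_iff_le_right hP.one_lt).mp h3
    have hcdvd : ordCompl[P] d ∣ m' := by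
      have h1 : ordCompl[P] d ∣ m' * P ^ K := dvd_trans (Nat.ordCompl_dvd d P) hdvd
      have h2 : Nat.Coprime (ordCompl[P] d) (P ^ K) :=
        Nat.Coprime.pow_right _ (Nat.coprime_ordCompl hP hd0).symm
      exact h2.dvd_of_dvd_mul_right h1
    simp only [Finset.mem_sigma, Finset.mem_range, Finset.mem_filter, Nat.mem_divisors]
    refine ⟨by omega, ⟨hcdvd, hm'⟩, ?_⟩
    rw [Nat.ordProj_mul_ordCompl_eq_self]
    exact hd
  · rintro ⟨j, e⟩ hσ
    simp only [Finset.mem_sigma, Finset.mem_filter] at hσ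
    exact hσ.2.2
  · intro d hd
    exact Nat.ordProj_mul_ordCompl_eq_self d P
  · rintro ⟨j, e⟩ hσ
    simp only [Finset.mem_sigma, Finset.mem_range, Finset.mem_filter, Nat.mem_divisors] at hσ
    obtain ⟨hj, ⟨hedvd, _⟩, _⟩ := hσ
    have he0 : e ≠ 0 := fun h => hm' (by simpa [h] using hedvd)
    have hPe : ¬ P ∣ e := fun h => hPm' (dvd_trans h hedvd)
    have hfact : (P ^ j * e).factorization P = j := by
      rw [Nat.factorization_mul (pow_ne_zero _ hP.pos.ne') he0]
      simp only [Finsupp.coe_add, Pi.add_apply]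
      rw [hP.factorization_pow, Nat.factorization_eq_zero_of_not_dvd hPe]
      simp
    have hcompl : ordCompl[P] (P ^ j * e) = e := by
      rw [hfact, Nat.mul_div_cancel_left _ (pow_pos hP.pos j)]
    simp only [hfact, hcompl]
    rw [Nat.mul_div_cancel_left _ (pow_pos hP.pos j)]
  · intro d hd
    have hd0 : d ≠ 0 := (Nat.pos_of_mem_divisors (hX hd)).ne'
    have hco2 : Nat.Coprime (P ^ d.factorization P) (ordCompl[P] d) :=
      Nat.Coprime.pow_left _ (Nat.coprime_ordCompl hP hd0)
    conv_lhs => rw [← Nat.ordProj_mul_ordCompl_eq_self d P]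
    exact Nat.totient_mul hco2

lemma divisor_decomp {m' P K d : ℕ} (hP : P.Prime) (hm' : m' ≠ 0) (hPm' : ¬ P ∣ m')
    (hdvd : d ∣ m' * P ^ K) (hd0 : d ≠ 0) :
    d.factorization P ≤ K ∧ ordCompl[P] d ∣ m'
      ∧ P ^ (d.factorization P) * ordCompl[P] d = d := by
  have hvK : d.factorization P ≤ K := by
    have h1 : P ^ d.factorization P ∣ m' * P ^ K := dvd_trans (Nat.ordProj_dvd d P) hdvd
    have h2 : Nat.Coprime (P ^ d.factorization P) m' :=
      Nat.Coprime.pow_left _ ((hP.coprime_iff_not_dvd).mpr hPm')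
    exact (Nat.pow_dvd_pow_iff_le_right hP.one_lt).mp (h2.dvd_of_dvd_mul_left h1)
  have hcdvd : ordCompl[P] d ∣ m' := by
    have h1 : ordCompl[P] d ∣ m' * P ^ K := dvd_trans (Nat.ordCompl_dvd d P) hdvd
    have h2 : Nat.Coprime (ordCompl[P] d) (P ^ K) :=
      Nat.Coprime.pow_right _ (Nat.coprime_ordCompl hP hd0).symm
    exact h2.dvd_of_dvd_mul_right h1
  exact ⟨hvK, hcdvd, Nat.ordProj_mul_ordCompl_eq_self d P⟩

lemma totient_subset_sum_inj :
    ∀ (s : ℕ) (p J : ℕ → ℕ),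
    (∀ i, i < s → (p i).Prime ∧ Odd (p i)) →
    (∀ r, 1 ≤ r → r < s → ∏ i ∈ Finset.range r, p i ^ J i < p r) →
    ∀ X Y : Finset ℕ,
      X ⊆ (∏ i ∈ Finset.range s, p i ^ J i).divisors →
      Y ⊆ (∏ i ∈ Finset.range s, p i ^ J i).divisors →
      (∑ d ∈ X, d.totient) = (∑ d ∈ Y, d.totient) → X = Y := by
  intro s
  induction s with
  | zero =>
    intro p J _ _ X Y hX hY hsum
    simp only [Finset.range_zero, Finset.prod_empty, Nat.divisors_one] at hX hY
    rcases Finset.subset_singleton_iff.mp hX with rfl | rfl <;>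
      rcases Finset.subset_singleton_iff.mp hY with rfl | rfl <;>
      simp_all [Nat.totient_one]
  | succ s ih =>
    intro p J hp hsep X Y hX hY hsum
    set m' := ∏ i ∈ Finset.range s, p i ^ J i with hm'def
    set P := p s with hPdef
    set K := J s with hKdef
    have hPp : P.Prime := (hp s (by omega)).1
    have hPodd : Odd P := (hp s (by omega)).2
    have hm'0 : m' ≠ 0 := by
      rw [hm'def]
      exact (Finset.prod_pos fun i hi =>
        pow_pos (hp i (by simp at hi; omega)).1.pos _).ne'
    have hm'odd : ¬ 2 ∣ m' := by
      intro h2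
      obtain ⟨i, hi, hdvd⟩ := (Nat.prime_iff.mp Nat.prime_two).exists_mem_finset_dvd h2
      have : 2 ∣ p i := Nat.Prime.dvd_of_dvd_pow Nat.prime_two hdvd
      have hodd := (hp i (by simp at hi; omega)).2
      rw [Nat.odd_iff] at hodd
      omega
    have hm'P : m' < P := by
      rcases Nat.eq_zero_or_pos s with rfl | hs
      · simpa [hm'def] using hPp.one_lt
      · exact hsep s (by omega) (by omega)
    have hm'M : m' ≤ P - 2 := by
      have hPodd' := hPodd
      rw [Nat.odd_iff] at hPodd'
      rcases Nat.even_or_odd m' with he | ho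
      · exact absurd he.two_dvd hm'odd
      · rw [Nat.odd_iff] at ho; omega
    have hPm' : ¬ P ∣ m' := fun h =>
      absurd (Nat.le_of_dvd (Nat.pos_of_ne_zero hm'0) h) (not_le.mpr hm'P)
    have hm : (∏ i ∈ Finset.range (s+1), p i ^ J i) = m' * P ^ K :=
      Finset.prod_range_succ _ _
    rw [hm] at hX hY
    have hdecX := phi_sum_decomp hPp hm'0 hPm' X hX
    have hdecY := phi_sum_decomp hPp hm'0 hPm' Y hY
    rw [hdecX, hdecY] at hsum
    have hbound : ∀ (Z : Finset ℕ) (j : ℕ),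
        (∑ e ∈ m'.divisors.filter (fun e => P ^ j * e ∈ Z), e.totient) ≤ m' := by
      intro Z j
      calc (∑ e ∈ m'.divisors.filter (fun e => P ^ j * e ∈ Z), e.totient)
          ≤ ∑ e ∈ m'.divisors, e.totient :=
            Finset.sum_le_sum_of_subset (Finset.filter_subset _ _)
        _ = m' := Nat.sum_totient m'
    have hparts : ∀ j, j ≤ K →
        (m'.divisors.filter (fun e => P ^ j * e ∈ X))
          = m'.divisors.filter (fun e => P ^ j * e ∈ Y) := by
      have hdig := phi_digits_unique hPp hPodd hm'M K
        (fun j => ∑ e ∈ m'.divisors.filter (fun e => P ^ j * e ∈ X), e.totient)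
        (fun j => ∑ e ∈ m'.divisors.filter (fun e => P ^ j * e ∈ Y), e.totient)
        (fun j _ => hbound X j) (fun j _ => hbound Y j) hsum
      intro j hj
      exact ih p J (fun i hi => hp i (by omega)) (fun r h1 h2 => hsep r h1 (by omega))
        _ _ (Finset.filter_subset _ _) (Finset.filter_subset _ _) (hdig j hj)
    have hsub : ∀ (Z W : Finset ℕ), Z ⊆ (m' * P ^ K).divisors →
        (∀ j, j ≤ K → (m'.divisors.filter (fun e => P ^ j * e ∈ Z))
          = m'.divisors.filter (fun e => P ^ j * e ∈ W)) → Z ⊆ W := by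
      intro Z W hZ hZW d hd
      have hdvd : d ∣ m' * P ^ K := Nat.dvd_of_mem_divisors (hZ hd)
      have hd0 : d ≠ 0 := (Nat.pos_of_mem_divisors (hZ hd)).ne'
      obtain ⟨hvK, hcdvd, hrec⟩ := divisor_decomp hPp hm'0 hPm' hdvd hd0
      have hcmem : ordCompl[P] d ∈ m'.divisors.filter
          (fun e => P ^ (d.factorization P) * e ∈ Z) := by
        rw [Finset.mem_filter, Nat.mem_divisors]
        refine ⟨⟨hcdvd, hm'0⟩, ?_⟩
        rw [hrec]
        exact hd
      rw [hZW _ hvK, Finset.mem_filter] at hcmem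
      have := hcmem.2
      rw [hrec] at this
      exact this
    exact le_antisymm (hsub X Y hX hparts) (hsub Y X hY (fun j hj => (hparts j hj).symm))

/-- So's conjecture for even `n = 2 p₁^{J₁} ⋯ p_s^{J_s}` where the partial products satisfy
`∏_{i ≤ r} p_i^{J_i} < p_{r+1}`. -/
theorem so_even_type
    (n s : ℕ) (p J : ℕ → ℕ)
    (heven : Even n) (hs : 2 ≤ s)
    (hp : ∀ i < s, (p i).Prime ∧ Odd (p i))
    (hJ : ∀ i < s, 1 ≤ J i)
    (hmono : ∀ i j, i < j → j < s → p i < p j)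
    (hfact : n = 2 * ∏ i ∈ Finset.range s, p i ^ J i)
    (hsep : ∀ r, 1 ≤ r → r < s → ∏ i ∈ Finset.range r, p i ^ J i < p r)
    (D₁ D₂ : Finset ℕ)
    (hD₁ : D₁ ⊆ n.divisors) (hD₂ : D₂ ⊆ n.divisors)
    (hn₁ : n ∉ D₁) (hn₂ : n ∉ D₂)
    (hspec : spec n (connSet n D₁) = spec n (connSet n D₂)) :
    D₁ = D₂ := by
  classical
  set m := ∏ i ∈ Finset.range s, p i ^ J i with hmdef
  have hm0 : m ≠ 0 := by
    rw [hmdef]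
    exact (Finset.prod_pos fun i hi =>
      pow_pos (hp i (Finset.mem_range.mp hi)).1.pos _).ne'
  have hmodd : ¬ 2 ∣ m := by
    intro h2
    obtain ⟨i, hi, hdvd⟩ := (Nat.prime_iff.mp Nat.prime_two).exists_mem_finset_dvd h2
    have h2p : 2 ∣ p i := Nat.Prime.dvd_of_dvd_pow Nat.prime_two hdvd
    have hodd := (hp i (Finset.mem_range.mp hi)).2
    rw [Nat.odd_iff] at hodd
    omega
  have hn0 : n ≠ 0 := by rw [hfact]; positivity
  have h2n : 2 ∣ n := ⟨m, hfact⟩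
  have hn2m : n = 2 * m := hfact
  have hhalf : n / 2 = m := by omega
  -- degree equality
  have hcard : (connSet n D₁).card = (connSet n D₂).card :=
    le_antisymm (card_le_of_spec_eq hn0 hspec) (card_le_of_spec_eq hn0 hspec.symm)
  rw [card_connSet hn0 hD₁, card_connSet hn0 hD₂] at hcard
  -- eigenvalue at n/2 equality
  have hlamh := lam_half_eq_of_spec_eq h2n hn0 hn₁ hn₂ hspec
  rw [lam_half_value h2n hn0 hD₁, lam_half_value h2n hn0 hD₂] at hlamh
  -- split sums by parity
  set E₁ := ∑ d ∈ D₁.filter (fun d => Even d), Nat.totient (n / d) with hE₁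
  set O₁ := ∑ d ∈ D₁.filter (fun d => ¬ Even d), Nat.totient (n / d) with hO₁
  set E₂ := ∑ d ∈ D₂.filter (fun d => Even d), Nat.totient (n / d) with hE₂
  set O₂ := ∑ d ∈ D₂.filter (fun d => ¬ Even d), Nat.totient (n / d) with hO₂
  have hsplit₁ : E₁ + O₁ = ∑ d ∈ D₁, Nat.totient (n / d) :=
    Finset.sum_filter_add_sum_filter_not _ _ _
  have hsplit₂ : E₂ + O₂ = ∑ d ∈ D₂, Nat.totient (n / d) :=
    Finset.sum_filter_add_sum_filter_not _ _ _
  have hsumEO : E₁ + O₁ = E₂ + O₂ := by rw [hsplit₁, hsplit₂, hcard]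
  have hlamh' : (E₁ : ℂ) - (O₁ : ℂ) = (E₂ : ℂ) - (O₂ : ℂ) := by
    rw [hE₁, hO₁, hE₂, hO₂]
    push_cast
    push_cast at hlamh
    exact hlamh
  have hEc : (E₁ : ℂ) = (E₂ : ℂ) := by
    have hc : ((E₁ + O₁ : ℕ) : ℂ) = ((E₂ + O₂ : ℕ) : ℂ) := by exact_mod_cast hsumEO
    push_cast at hc
    linear_combination (hc + hlamh') / 2
  have hE : E₁ = E₂ := by exact_mod_cast hEc
  have hO : O₁ = O₂ := by omega
  -- transfer the odd parts to divisors of m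
  have hodd_dvd_m : ∀ {D : Finset ℕ}, D ⊆ n.divisors → ∀ d ∈ D.filter (fun d => ¬ Even d),
      d ∣ m ∧ Nat.totient (n / d) = Nat.totient (m / d) := by
    intro D hD d hd
    rw [Finset.mem_filter] at hd
    have hdn : d ∣ n := Nat.dvd_of_mem_divisors (hD hd.1)
    have hd2 : ¬ 2 ∣ d := by
      intro h; exact hd.2 (even_iff_two_dvd.mpr h)
    have hco : Nat.Coprime 2 d := (Nat.Prime.coprime_iff_not_dvd Nat.prime_two).mpr hd2
    have hdm : d ∣ m := by
      apply hco.symm.dvd_of_dvd_mul_left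
      rw [← hn2m]; exact hdn
    refine ⟨hdm, ?_⟩
    have hnd : n / d = 2 * (m / d) := by
      rw [hn2m, Nat.mul_div_assoc 2 hdm]
    rw [hnd, Nat.totient_mul, Nat.totient_two, one_mul]
    -- coprime 2 (m/d)
    refine (Nat.Prime.coprime_iff_not_dvd Nat.prime_two).mpr ?_
    intro h
    exact hmodd (dvd_trans h (Nat.div_dvd_of_dvd hdm))
  have heven_dvd : ∀ {D : Finset ℕ}, D ⊆ n.divisors → n ∉ D →
      ∀ d ∈ D.filter (fun d => Even d),
      d / 2 ∣ m ∧ 2 * (d / 2) = d ∧ Nat.totient (n / d) = Nat.totient (m / (d / 2)) := by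
    intro D hD hnD d hd
    rw [Finset.mem_filter] at hd
    have hdn : d ∣ n := Nat.dvd_of_mem_divisors (hD hd.1)
    have hd2 : 2 ∣ d := even_iff_two_dvd.mp hd.2
    obtain ⟨d', rfl⟩ := hd2
    have hd'm : d' ∣ m := by
      have : 2 * d' ∣ 2 * m := by rw [← hn2m]; exact hdn
      exact (mul_dvd_mul_iff_left (two_ne_zero)).mp this
    have h1 : 2 * d' / 2 = d' := by omega
    refine ⟨by rw [h1]; exact hd'm, by omega, ?_⟩
    rw [h1, hn2m, Nat.mul_div_mul_left _ _ (by norm_num)]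
  -- odd parts equal
  have hOddEq : D₁.filter (fun d => ¬ Even d) = D₂.filter (fun d => ¬ Even d) := by
    set X₁ := (D₁.filter (fun d => ¬ Even d)).image (fun d => m / d) with hX₁
    set X₂ := (D₂.filter (fun d => ¬ Even d)).image (fun d => m / d) with hX₂
    have hinj : ∀ {D : Finset ℕ} (hD : D ⊆ n.divisors),
        Set.InjOn (fun d => m / d) (D.filter (fun d => ¬ Even d)) := by
      intro D hD a ha b hb hab
      have hda := (hodd_dvd_m hD a (by simpa using ha)).1
      have hdb := (hodd_dvd_m hD b (by simpa using hb)).1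
      simp only at hab
      rw [← Nat.div_div_self hda hm0, ← Nat.div_div_self hdb hm0, hab]
    have hsum : ∀ {D : Finset ℕ} (hD : D ⊆ n.divisors),
        (∑ e ∈ (D.filter (fun d => ¬ Even d)).image (fun d => m / d), e.totient)
          = ∑ d ∈ D.filter (fun d => ¬ Even d), Nat.totient (n / d) := by
      intro D hD
      rw [Finset.sum_image (fun a ha b hb => hinj hD ha hb)]
      exact Finset.sum_congr rfl fun d hd => ((hodd_dvd_m hD d hd).2).symm
    have hXsub : ∀ {D : Finset ℕ} (hD : D ⊆ n.divisors),
        (D.filter (fun d => ¬ Even d)).image (fun d => m / d) ⊆ m.divisors := by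
      intro D hD e he
      obtain ⟨d, hd, rfl⟩ := Finset.mem_image.mp he
      exact Nat.mem_divisors.mpr ⟨Nat.div_dvd_of_dvd (hodd_dvd_m hD d hd).1, hm0⟩
    have hXeq : X₁ = X₂ := by
      apply totient_subset_sum_inj s p J hp hsep _ _ (hXsub hD₁) (hXsub hD₂)
      rw [hsum hD₁, hsum hD₂, ← hO₁, ← hO₂, hO]
    ext d
    constructor
    · intro hd
      have hdm := (hodd_dvd_m hD₁ d hd).1
      have : m / d ∈ X₂ := hXeq ▸ (Finset.mem_image_of_mem _ hd)
      obtain ⟨d', hd', heq'⟩ := Finset.mem_image.mp this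
      have hdm' := (hodd_dvd_m hD₂ d' hd').1
      have : d' = d := by
        rw [← Nat.div_div_self hdm' hm0, ← Nat.div_div_self hdm hm0, heq']
      rwa [← this]
    · intro hd
      have hdm := (hodd_dvd_m hD₂ d hd).1
      have : m / d ∈ X₁ := hXeq ▸ (Finset.mem_image_of_mem _ hd)
      obtain ⟨d', hd', heq'⟩ := Finset.mem_image.mp this
      have hdm' := (hodd_dvd_m hD₁ d' hd').1
      have : d' = d := by
        rw [← Nat.div_div_self hdm' hm0, ← Nat.div_div_self hdm hm0, heq']
      rwa [← this]
  -- even parts equal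
  have hEvenEq : D₁.filter (fun d => Even d) = D₂.filter (fun d => Even d) := by
    set X₁ := (D₁.filter (fun d => Even d)).image (fun d => m / (d / 2)) with hX₁
    set X₂ := (D₂.filter (fun d => Even d)).image (fun d => m / (d / 2)) with hX₂
    have hinj : ∀ {D : Finset ℕ} (hD : D ⊆ n.divisors) (hnD : n ∉ D),
        Set.InjOn (fun d => m / (d / 2)) (D.filter (fun d => Even d)) := by
      intro D hD hnD a ha b hb hab
      obtain ⟨hda, hha, _⟩ := heven_dvd hD hnD a (by simpa using ha)
      obtain ⟨hdb, hhb, _⟩ := heven_dvd hD hnD b (by simpa using hb)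
      simp only at hab
      have : a / 2 = b / 2 := by
        rw [← Nat.div_div_self hda hm0, ← Nat.div_div_self hdb hm0, hab]
      omega
    have hsum : ∀ {D : Finset ℕ} (hD : D ⊆ n.divisors) (hnD : n ∉ D),
        (∑ e ∈ (D.filter (fun d => Even d)).image (fun d => m / (d / 2)), e.totient)
          = ∑ d ∈ D.filter (fun d => Even d), Nat.totient (n / d) := by
      intro D hD hnD
      rw [Finset.sum_image (fun a ha b hb => hinj hD hnD ha hb)]
      exact Finset.sum_congr rfl fun d hd => ((heven_dvd hD hnD d hd).2.2).symm
    have hXsub : ∀ {D : Finset ℕ} (hD : D ⊆ n.divisors) (hnD : n ∉ D),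
        (D.filter (fun d => Even d)).image (fun d => m / (d / 2)) ⊆ m.divisors := by
      intro D hD hnD e he
      obtain ⟨d, hd, rfl⟩ := Finset.mem_image.mp he
      exact Nat.mem_divisors.mpr ⟨Nat.div_dvd_of_dvd (heven_dvd hD hnD d hd).1, hm0⟩
    have hXeq : X₁ = X₂ := by
      apply totient_subset_sum_inj s p J hp hsep _ _ (hXsub hD₁ hn₁) (hXsub hD₂ hn₂)
      rw [hsum hD₁ hn₁, hsum hD₂ hn₂, ← hE₁, ← hE₂, hE]
    ext d
    constructor
    · intro hd
      obtain ⟨hda, hha, _⟩ := heven_dvd hD₁ hn₁ d hd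
      have : m / (d / 2) ∈ X₂ := hXeq ▸ (Finset.mem_image_of_mem _ hd)
      obtain ⟨d', hd', heq'⟩ := Finset.mem_image.mp this
      obtain ⟨hda', hha', _⟩ := heven_dvd hD₂ hn₂ d' hd'
      have : d' / 2 = d / 2 := by
        rw [← Nat.div_div_self hda' hm0, ← Nat.div_div_self hda hm0, heq']
      have : d' = d := by omega
      rwa [← this]
    · intro hd
      obtain ⟨hda, hha, _⟩ := heven_dvd hD₂ hn₂ d hd
      have : m / (d / 2) ∈ X₁ := hXeq ▸ (Finset.mem_image_of_mem _ hd)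
      obtain ⟨d', hd', heq'⟩ := Finset.mem_image.mp this
      obtain ⟨hda', hha', _⟩ := heven_dvd hD₁ hn₁ d' hd'
      have : d' / 2 = d / 2 := by
        rw [← Nat.div_div_self hda' hm0, ← Nat.div_div_self hda hm0, heq']
      have : d' = d := by omega
      rwa [← this]
  -- combine
  have h₁ : D₁ = D₁.filter (fun d => Even d) ∪ D₁.filter (fun d => ¬ Even d) :=
    (Finset.filter_union_filter_not_eq _ D₁).symm
  have h₂ : D₂ = D₂.filter (fun d => Even d) ∪ D₂.filter (fun d => ¬ Even d) :=
    (Finset.filter_union_filter_not_eq _ D₂).symm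
  rw [h₁, h₂, hOddEq, hEvenEq]
end

section
/- Let p and q be primes with 3 ≤ p < q and set n = p^2 q^2. Let D_1 and D_2 be sets of divisors of n with n ∉ D_1 and n ∉ D_2. If the integral circulant graphs ICG(n,D_1) and ICG(n,D_2) are isospectral, then D_1 = D_2. -/
open Finset

open ArithmeticFunction
open scoped ArithmeticFunction.zeta

lemma omegaN_prim (n : ℕ) (hn : n ≠ 0) : IsPrimitiveRoot (omegaN n) n :=
  Complex.isPrimitiveRoot_exp n hn

lemma omegaN_pow_div (n d : ℕ) (hn : n ≠ 0) (hd : d ∣ n) :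
    omegaN n ^ d = omegaN (n / d) := by
  have hd0 : d ≠ 0 := by
    rintro rfl
    exact hn (Nat.eq_zero_of_zero_dvd hd)
  have hnd0 : (n / d) ≠ 0 := Nat.div_ne_zero_iff.mpr ⟨hd0, Nat.le_of_dvd (Nat.pos_of_ne_zero hn) hd⟩
  unfold omegaN
  rw [← Complex.exp_nat_mul]
  congr 1
  have : (n : ℂ) = (d : ℂ) * ((n / d : ℕ) : ℂ) := by
    rw [← Nat.cast_mul, Nat.mul_div_cancel' hd]
  rw [this]
  have hdc : (d : ℂ) ≠ 0 := Nat.cast_ne_zero.mpr hd0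
  have hndc : ((n / d : ℕ) : ℂ) ≠ 0 := Nat.cast_ne_zero.mpr hnd0
  field_simp

lemma geom_sum_omega (N k : ℕ) (hN : N ≠ 0) :
    ∑ t ∈ Icc 1 N, omegaN N ^ (k * t) = if N ∣ k then (N : ℂ) else 0 := by
  have hprim := omegaN_prim N hN
  have hz : ∀ t, omegaN N ^ (k * t) = (omegaN N ^ k) ^ t := fun t => by rw [pow_mul]
  by_cases h : N ∣ k
  · have h1 : omegaN N ^ k = 1 := (hprim.pow_eq_one_iff_dvd k).mpr h
    simp only [hz, h1, one_pow, if_pos h, Finset.sum_const, Nat.card_Icc]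
    simp
  · have h1 : omegaN N ^ k ≠ 1 := fun hc => h ((hprim.pow_eq_one_iff_dvd k).mp hc)
    rw [if_neg h]
    simp only [hz]
    have : Icc 1 N = Ico 1 (N + 1) := by
      ext x; simp [Nat.lt_succ_iff]
    rw [this, Finset.sum_Ico_eq_sum_range]
    have hNpow : (omegaN N ^ k) ^ N = 1 := by
      rw [← pow_mul, mul_comm, pow_mul, hprim.pow_eq_one, one_pow]
    calc ∑ i ∈ range (N + 1 - 1), (omegaN N ^ k) ^ (1 + i)
        = (omegaN N ^ k) * ∑ i ∈ range N, (omegaN N ^ k) ^ i := by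
          rw [Finset.mul_sum]
          simp [pow_add]
      _ = 0 := by
          rw [geom_sum_eq h1, hNpow]
          simp


noncomputable def RS (m k : ℕ) : ℤ :=
  ∑ u ∈ m.divisors, (moebius u) * (if (m / u) ∣ k then ((m / u : ℕ) : ℤ) else 0)

lemma moebius_divisor_sum (j : ℕ) (hj : j ≠ 0) :
    (∑ u ∈ j.divisors, moebius u) = if j = 1 then 1 else 0 := by
  have h : (moebius * ζ : ArithmeticFunction ℤ) j = (1 : ArithmeticFunction ℤ) j := by
    rw [moebius_mul_coe_zeta]
  rw [mul_apply] at h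
  rw [one_apply] at h
  rw [← h, Nat.sum_divisorsAntidiagonal (fun u v => moebius u * (ζ : ArithmeticFunction ℤ) v)]
  apply Finset.sum_congr rfl
  intro u hu
  have hu2 : j / u ≠ 0 := by
    obtain ⟨hud, _⟩ := Nat.mem_divisors.mp hu
    have : 0 < j / u := Nat.div_pos (Nat.le_of_dvd (Nat.pos_of_ne_zero hj) hud)
      (Nat.pos_of_ne_zero (by rintro rfl; exact hj (Nat.eq_zero_of_zero_dvd hud)))
    omega
  rw [natCoe_apply, zeta_apply_ne hu2]
  simp

lemma sum_filter_dvd_reindex {β : Type*} [AddCommMonoid β] (m u : ℕ) (hu : u ∣ m) (hu0 : u ≠ 0)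
    (f : ℕ → β) :
    ∑ t ∈ (Icc 1 m).filter (fun t => u ∣ t), f t = ∑ v ∈ Icc 1 (m / u), f (u * v) := by
  have hu0' : 0 < u := Nat.pos_of_ne_zero hu0
  refine Finset.sum_nbij' (i := fun t => t / u) (j := fun v => u * v) ?_ ?_ ?_ ?_ ?_
  · intro t ht
    simp only [Finset.mem_filter, Finset.mem_Icc] at ht ⊢
    obtain ⟨⟨h1, h2⟩, hdvd⟩ := ht
    constructor
    · exact (Nat.one_le_div_iff hu0').mpr (Nat.le_of_dvd (by omega) hdvd)
    · exact Nat.div_le_div_right h2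
  · intro v hv
    simp only [Finset.mem_filter, Finset.mem_Icc] at hv ⊢
    obtain ⟨h1, h2⟩ := hv
    refine ⟨⟨Nat.mul_pos hu0' (by omega), ?_⟩, Dvd.intro v rfl⟩
    calc u * v ≤ u * (m / u) := Nat.mul_le_mul_left u h2
      _ = m := Nat.mul_div_cancel' hu
  · intro t ht
    simp only [Finset.mem_filter] at ht
    exact Nat.mul_div_cancel' ht.2
  · intro v _
    exact Nat.mul_div_cancel_left v hu0'
  · intro t ht
    simp only [Finset.mem_filter] at ht
    rw [Nat.mul_div_cancel' ht.2]

lemma RS_eq_ramanujan (m k : ℕ) (hm : m ≠ 0) :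
    ∑ t ∈ (Icc 1 m).filter (fun t => Nat.gcd t m = 1), omegaN m ^ (k * t) = (RS m k : ℂ) := by
  rw [Finset.sum_filter]
  have step1 : ∀ t ∈ Icc 1 m,
      (if Nat.gcd t m = 1 then omegaN m ^ (k*t) else 0)
      = ∑ u ∈ m.divisors, (if u ∣ t then (moebius u : ℂ) else 0) * omegaN m ^ (k*t) := by
    intro t ht
    have hg0 : Nat.gcd t m ≠ 0 := by
      intro hc; exact hm (Nat.eq_zero_of_gcd_eq_zero_right hc)
    have hdiv : m.divisors.filter (· ∣ t) = (Nat.gcd t m).divisors := by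
      ext u
      simp only [Nat.mem_divisors, Finset.mem_filter]
      constructor
      · rintro ⟨⟨hum, _⟩, hut⟩
        exact ⟨Nat.dvd_gcd hut hum, hg0⟩
      · rintro ⟨hu, _⟩
        exact ⟨⟨hu.trans (Nat.gcd_dvd_right t m), hm⟩, hu.trans (Nat.gcd_dvd_left t m)⟩
    have hsum : (∑ u ∈ m.divisors, (if u ∣ t then (moebius u : ℂ) else 0))
        = if Nat.gcd t m = 1 then 1 else 0 := by
      rw [← Finset.sum_filter, hdiv]
      rw [show (∑ u ∈ (Nat.gcd t m).divisors, (moebius u : ℂ))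
          = ((∑ u ∈ (Nat.gcd t m).divisors, moebius u : ℤ) : ℂ) by push_cast; ring]
      rw [moebius_divisor_sum _ hg0]
      split <;> simp
    rw [← Finset.sum_mul, hsum]
    split <;> simp
  rw [Finset.sum_congr rfl step1, Finset.sum_comm]
  have step2 : ∀ u ∈ m.divisors,
      (∑ t ∈ Icc 1 m, (if u ∣ t then (moebius u : ℂ) else 0) * omegaN m ^ (k*t))
      = (moebius u : ℂ) * (if (m/u) ∣ k then ((m/u : ℕ) : ℂ) else 0) := by
    intro u hu
    obtain ⟨hum, hm0⟩ := Nat.mem_divisors.mp hu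
    have hu0 : u ≠ 0 := by
      rintro rfl; exact hm (Nat.eq_zero_of_zero_dvd hum)
    have : (∑ t ∈ Icc 1 m, (if u ∣ t then (moebius u : ℂ) else 0) * omegaN m ^ (k*t))
        = ∑ t ∈ (Icc 1 m).filter (fun t => u ∣ t), (moebius u : ℂ) * omegaN m ^ (k*t) := by
      rw [Finset.sum_filter]
      apply Finset.sum_congr rfl
      intro t _
      split <;> simp
    rw [this, sum_filter_dvd_reindex m u hum hu0 (fun t => (moebius u : ℂ) * omegaN m ^ (k*t)),
      ← Finset.mul_sum]
    congr 1
    have hstep : ∀ v, omegaN m ^ (k * (u * v)) = omegaN (m/u) ^ (k * v) := by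
      intro v
      rw [← omegaN_pow_div m u hm hum, ← pow_mul]
      congr 1
      ring
    rw [Finset.sum_congr rfl (fun v _ => hstep v)]
    exact geom_sum_omega (m/u) k (by
      have : 0 < m / u := Nat.div_pos (Nat.le_of_dvd (Nat.pos_of_ne_zero hm) hum) (Nat.pos_of_ne_zero hu0)
      omega)
  rw [Finset.sum_congr rfl step2]
  unfold RS
  rw [Int.cast_sum]
  apply Finset.sum_congr rfl
  intro u _
  rw [Int.cast_mul]
  congr 1
  split <;> simp only [Int.cast_natCast, Int.cast_zero]


noncomputable def Lz (n : ℕ) (D : Finset ℕ) (k : ℕ) : ℤ := ∑ d ∈ D, RS (n / d) k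
noncomputable def Mz (n : ℕ) (D : Finset ℕ) : Multiset ℤ := (Icc 1 n).val.map (Lz n D)

lemma lam_connSet (n : ℕ) (hn : n ≠ 0) (D : Finset ℕ) (hD : D ⊆ n.divisors) (k : ℕ) :
    lam n (connSet n D) k = ((Lz n D k : ℤ) : ℂ) := by
  unfold lam connSet Lz
  rw [← Finset.sum_fiberwise_of_maps_to (g := fun j => Nat.gcd j n) (t := D)
    (fun j hj => (Finset.mem_filter.mp hj).2)]
  rw [Int.cast_sum]
  apply Finset.sum_congr rfl
  intro d hd
  obtain ⟨hdn, -⟩ := Nat.mem_divisors.mp (hD hd)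
  have hd0 : d ≠ 0 := by rintro rfl; exact hn (Nat.eq_zero_of_zero_dvd hdn)
  have hdpos : 0 < d := Nat.pos_of_ne_zero hd0
  have hnd0 : (n / d) ≠ 0 := by
    have : 0 < n / d := Nat.div_pos (Nat.le_of_dvd (Nat.pos_of_ne_zero hn) hdn) hdpos
    omega
  have hfib : ((Icc 1 n).filter (fun j => Nat.gcd j n ∈ D)).filter (fun j => Nat.gcd j n = d)
      = (Icc 1 n).filter (fun j => Nat.gcd j n = d) := by
    rw [Finset.filter_filter]
    apply Finset.filter_congr
    intro j _
    constructor
    · rintro ⟨-, h⟩; exact h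
    · intro h; exact ⟨h ▸ hd, h⟩
  rw [hfib, ← RS_eq_ramanujan (n / d) k hnd0]
  have hgcdmul : ∀ t : ℕ, Nat.gcd (d * t) n = d * Nat.gcd t (n / d) := by
    intro t
    conv_lhs => rw [show n = d * (n / d) from (Nat.mul_div_cancel' hdn).symm]
    exact Nat.gcd_mul_left d t (n / d)
  refine Finset.sum_nbij' (i := fun j => j / d) (j := fun t => d * t) ?_ ?_ ?_ ?_ ?_
  · intro j hj
    simp only [Finset.mem_filter, Finset.mem_Icc] at hj ⊢
    obtain ⟨⟨h1, h2⟩, hg⟩ := hj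
    have hdj : d ∣ j := hg ▸ Nat.gcd_dvd_left j n
    refine ⟨⟨(Nat.one_le_div_iff hdpos).mpr (Nat.le_of_dvd (by omega) hdj), Nat.div_le_div_right h2⟩, ?_⟩
    have hj' : j = d * (j / d) := (Nat.mul_div_cancel' hdj).symm
    have := hgcdmul (j / d)
    rw [← hj', hg] at this
    exact Nat.eq_of_mul_eq_mul_left hdpos (by omega)
  · intro t ht
    simp only [Finset.mem_filter, Finset.mem_Icc] at ht ⊢
    obtain ⟨⟨h1, h2⟩, hg⟩ := ht
    refine ⟨⟨Nat.mul_pos hdpos (by omega), ?_⟩, ?_⟩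
    · calc d * t ≤ d * (n / d) := Nat.mul_le_mul_left d h2
        _ = n := Nat.mul_div_cancel' hdn
    · rw [hgcdmul t, hg, mul_one]
  · intro j hj
    simp only [Finset.mem_filter] at hj
    exact Nat.mul_div_cancel' (hj.2 ▸ Nat.gcd_dvd_left j n)
  · intro t _
    exact Nat.mul_div_cancel_left t hdpos
  · intro j hj
    simp only [Finset.mem_filter] at hj
    have hdj : d ∣ j := hj.2 ▸ Nat.gcd_dvd_left j n
    have hj' : j = d * (j / d) := (Nat.mul_div_cancel' hdj).symm
    conv_lhs => rw [hj']
    rw [← omegaN_pow_div n d hn hdn, ← pow_mul]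
    congr 1
    ring

lemma spec_eq_Mz (n : ℕ) (hn : n ≠ 0) (D : Finset ℕ) (hD : D ⊆ n.divisors) :
    spec n (connSet n D) = (Mz n D).map (fun z : ℤ => (z : ℂ)) := by
  unfold spec Mz
  rw [Multiset.map_map]
  exact Multiset.map_congr rfl (fun k _ => lam_connSet n hn D hD k)

lemma Mz_eq_of_spec_eq (n : ℕ) (hn : n ≠ 0) (D₁ D₂ : Finset ℕ)
    (hD₁ : D₁ ⊆ n.divisors) (hD₂ : D₂ ⊆ n.divisors)
    (h : spec n (connSet n D₁) = spec n (connSet n D₂)) : Mz n D₁ = Mz n D₂ := by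
  apply Multiset.map_injective (f := fun z : ℤ => (z : ℂ)) Int.cast_injective
  rw [← spec_eq_Mz n hn D₁ hD₁, ← spec_eq_Mz n hn D₂ hD₂, h]


lemma RS_mul (a b k : ℕ) (hab : Nat.Coprime a b) : RS (a * b) k = RS a k * RS b k := by
  classical
  let G : ArithmeticFunction ℤ := ⟨fun w => if w ∣ k then (w : ℤ) else 0, by simp⟩
  have hGapp : ∀ w, G w = if w ∣ k then (w : ℤ) else 0 := fun w => rfl
  have hG : G.IsMultiplicative := by
    constructor
    · simp [hGapp]
    · intro x y hxy
      rw [hGapp, hGapp, hGapp]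
      by_cases hx : x ∣ k
      · by_cases hy : y ∣ k
        · rw [if_pos hx, if_pos hy, if_pos (Nat.Coprime.mul_dvd_of_dvd_of_dvd hxy hx hy)]
          push_cast; ring
        · rw [if_neg hy, if_neg (fun h => hy ((dvd_mul_left y x).trans h)), mul_zero]
      · rw [if_neg hx, if_neg (fun h => hx ((dvd_mul_right x y).trans h)), zero_mul]
  have hRS : ∀ m, RS m k = (moebius * G) m := by
    intro m
    rw [mul_apply, Nat.sum_divisorsAntidiagonal (fun u v => moebius u * G v)]
    apply Finset.sum_congr rfl
    intro u _
    rw [hGapp]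
  rw [hRS, hRS, hRS, (isMultiplicative_moebius.mul hG).map_mul_of_coprime hab]

lemma RS_one (k : ℕ) : RS 1 k = 1 := by
  simp [RS]

lemma RS_prime (r k : ℕ) (hr : r.Prime) :
    RS r k = (if r ∣ k then (r : ℤ) else 0) - 1 := by
  have hd : (r : ℕ).divisors = {1, r} := hr.divisors
  have h1r : (1 : ℕ) ∉ ({r} : Finset ℕ) := by simp [hr.ne_one.symm, (Nat.Prime.one_lt hr).ne]
  rw [RS, hd, Finset.sum_insert (by simpa using (Nat.Prime.one_lt hr).ne), Finset.sum_singleton]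
  rw [Nat.div_one, Nat.div_self hr.pos]
  rw [moebius_apply_one, moebius_apply_prime hr]
  simp only [one_dvd, if_true, one_mul, Nat.cast_one]
  ring

lemma RS_prime_sq (r k : ℕ) (hr : r.Prime) :
    RS (r^2) k = (if r^2 ∣ k then ((r^2 : ℕ) : ℤ) else 0) - (if r ∣ k then (r : ℤ) else 0) := by
  rw [RS, Nat.sum_divisors_prime_pow hr]
  rw [Finset.sum_range_succ, Finset.sum_range_succ, Finset.sum_range_one]
  have h0 : r^2 / r^0 = r^2 := by simp
  have h1 : r^2 / r^1 = r := by
    rw [Nat.pow_div (by norm_num) hr.pos, pow_one]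
  have h2 : r^2 / r^2 = 1 := Nat.div_self (pow_pos hr.pos 2)
  rw [h0, h1, h2, pow_zero, pow_one, moebius_apply_one, moebius_apply_prime hr,
    moebius_apply_prime_pow hr (by norm_num)]
  simp only [one_dvd, if_true, Nat.cast_one]
  push_cast
  split_ifs <;> ring

lemma gcd_mul_coprime (k a b : ℕ) (hab : Nat.Coprime a b) :
    Nat.gcd k (a * b) = Nat.gcd k a * Nat.gcd k b := by
  apply Nat.dvd_antisymm
  · obtain ⟨y, z, hy, hz, hyz⟩ := Nat.dvd_mul.mp (Nat.gcd_dvd_right k (a*b))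
    have hyg : y ∣ Nat.gcd k (a*b) := hyz ▸ dvd_mul_right y z
    have hzg : z ∣ Nat.gcd k (a*b) := hyz ▸ dvd_mul_left z y
    exact hyz ▸ mul_dvd_mul
      (Nat.dvd_gcd (hyg.trans (Nat.gcd_dvd_left k (a*b))) hy)
      (Nat.dvd_gcd (hzg.trans (Nat.gcd_dvd_left k (a*b))) hz)
  · have hcop : Nat.Coprime (Nat.gcd k a) (Nat.gcd k b) :=
      Nat.Coprime.coprime_dvd_left (Nat.gcd_dvd_right k a)
        (Nat.Coprime.coprime_dvd_right (Nat.gcd_dvd_right k b) hab)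
    exact Nat.dvd_gcd
      (Nat.Coprime.mul_dvd_of_dvd_of_dvd hcop (Nat.gcd_dvd_left k a) (Nat.gcd_dvd_left k b))
      (mul_dvd_mul (Nat.gcd_dvd_right k a) (Nat.gcd_dvd_right k b))

lemma dvd_reduce (r s : ℕ) (hr : r.Prime) (hs : s.Prime) (hrs : r ≠ s) (e : ℕ)
    (w : ℕ) (hw : w ∣ r^2 * s^2) (hnd : ¬ r^e ∣ w) : w ∣ r^(e-1) * s^2 := by
  have hcop : Nat.Coprime (r^2) (s^2) := ((Nat.coprime_primes hr hs).mpr hrs).pow 2 2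
  have hdecomp : Nat.gcd w (r^2) * Nat.gcd w (s^2) = w :=
    (Nat.gcd_mul_gcd_eq_iff_dvd_mul_of_coprime hcop).mpr hw
  obtain ⟨i, hi2, hig⟩ := (Nat.dvd_prime_pow hr).mp (Nat.gcd_dvd_right w (r^2))
  have hie : i ≤ e - 1 := by
    by_contra hc
    push_neg at hc
    exact hnd ((pow_dvd_pow r (by omega)).trans (hig ▸ Nat.gcd_dvd_left w (r^2)))
  calc w = Nat.gcd w (r^2) * Nat.gcd w (s^2) := hdecomp.symm
    _ ∣ r^(e-1) * s^2 := mul_dvd_mul (hig ▸ pow_dvd_pow r hie) (Nat.gcd_dvd_right w (s^2))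

lemma RS_mod_gen (P W m k N : ℕ) (hm : m ∣ N)
    (hred : ∀ w', w' ∣ N → ¬ P ∣ w' → w' ∣ W) :
    ((RS m k : ℤ) : ZMod P) = ((RS m (Nat.gcd k W) : ℤ) : ZMod P) := by
  rw [RS, RS, Int.cast_sum, Int.cast_sum]
  apply Finset.sum_congr rfl
  intro u hu
  obtain ⟨hum, hm0⟩ := Nat.mem_divisors.mp hu
  have hwm : m / u ∣ m := ⟨u, (Nat.div_mul_cancel hum).symm⟩
  have hwN : m / u ∣ N := hwm.trans hm
  by_cases hPw : P ∣ (m / u)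
  · have hcast : (((m / u : ℕ) : ℤ) : ZMod P) = 0 := by
      rw [Int.cast_natCast]
      exact (ZMod.natCast_eq_zero_iff (m/u) P).mpr hPw
    push_cast
    split_ifs <;> simp_all
  · have hwW : m / u ∣ W := hred (m/u) hwN hPw
    have hiff : (m / u ∣ k) ↔ (m / u ∣ Nat.gcd k W) :=
      ⟨fun h => Nat.dvd_gcd h hwW, fun h => h.trans (Nat.gcd_dvd_left k W)⟩
    simp only [hiff]

lemma gcd_sq_of_not_dvd (k s : ℕ) (hs : s.Prime) (h : ¬ s ∣ k) : Nat.gcd k (s^2) = 1 :=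
  Nat.Coprime.pow_right 2 (((Nat.Prime.coprime_iff_not_dvd hs).mpr h).symm)

lemma gcd_sq_of_dvd_not (k s : ℕ) (hs : s.Prime) (h1 : s ∣ k) (h2 : ¬ s^2 ∣ k) :
    Nat.gcd k (s^2) = s := by
  obtain ⟨i, hi2, hig⟩ := (Nat.dvd_prime_pow hs).mp (Nat.gcd_dvd_right k (s^2))
  have hsg : s ∣ Nat.gcd k (s^2) := Nat.dvd_gcd h1 (dvd_pow_self s two_ne_zero)
  interval_cases i
  · rw [pow_zero] at hig
    rw [hig] at hsg
    exact absurd (Nat.le_of_dvd one_pos hsg) (by have := hs.two_le; omega)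
  · rw [pow_one] at hig; exact hig
  · rw [hig] at hsg ⊢
    exact absurd (hig ▸ Nat.gcd_dvd_left k (s^2)) h2

lemma gcd_sq_of_sq_dvd (k s : ℕ) (h : s^2 ∣ k) : Nat.gcd k (s^2) = s^2 :=
  Nat.gcd_eq_right h

lemma gcd_prime_of_not_dvd (k r : ℕ) (hr : r.Prime) (h : ¬ r ∣ k) : Nat.gcd k r = 1 :=
  ((Nat.Prime.coprime_iff_not_dvd hr).mpr h).symm

lemma gcd_prime_of_dvd (k r : ℕ) (h : r ∣ k) : Nat.gcd k r = r :=
  Nat.gcd_eq_right h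


lemma tri_replicate {γ : Type*} [DecidableEq γ] {c0 c1 c2 : ℕ} (h2 : 0 < c2) (h21 : c2 < c1)
    (h10 : c1 + c2 < c0) {x0 x1 x2 y0 y1 y2 : γ}
    (h : Multiset.replicate c0 x0 + Multiset.replicate c1 x1 + Multiset.replicate c2 x2
       = Multiset.replicate c0 y0 + Multiset.replicate c1 y1 + Multiset.replicate c2 y2) :
    x0 = y0 ∧ x1 = y1 ∧ x2 = y2 := by
  have hcount : ∀ a, (if x0 = a then c0 else 0) + (if x1 = a then c1 else 0)
        + (if x2 = a then c2 else 0)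
      = (if y0 = a then c0 else 0) + (if y1 = a then c1 else 0) + (if y2 = a then c2 else 0) := by
    intro a
    have := congrArg (Multiset.count a) h
    simpa [Multiset.count_add, Multiset.count_replicate] using this
  have hx0 : x0 = y0 := by
    by_contra hne
    have hh := hcount x0
    rw [if_pos rfl, if_neg (show ¬ (y0 = x0) from fun hh' => hne hh'.symm)] at hh
    split_ifs at hh <;> omega
  subst hx0
  have hx1 : x1 = y1 := by
    by_contra hne
    have hh := hcount x1
    rw [if_pos rfl, if_neg (show ¬ (y1 = x1) from fun hh' => hne hh'.symm)] at hh
    split_ifs at hh <;> omega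
  subst hx1
  refine ⟨rfl, rfl, ?_⟩
  by_contra hne
  have hh := hcount x2
  rw [if_pos rfl, if_neg (show ¬ (y2 = x2) from fun hh' => hne hh'.symm)] at hh
  split_ifs at hh <;> omega

lemma map_split (s : Finset ℕ) (p : ℕ → Prop) [DecidablePred p] {β : Type*} (f : ℕ → β) :
    s.val.map f = ((s.filter p).val.map f) + ((s.filter (fun x => ¬ p x)).val.map f) := by
  rw [Finset.filter_val, Finset.filter_val, ← Multiset.map_add, Multiset.filter_add_not]

lemma map_const_on (s : Finset ℕ) {β : Type*} (f : ℕ → β) (b : β) (h : ∀ x ∈ s, f x = b) :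
    s.val.map f = Multiset.replicate s.card b := by
  rw [Multiset.map_congr rfl (fun x hx => h x hx), Multiset.map_const']
  rfl

lemma card_Icc_filter_dvd (n d : ℕ) :
    ((Icc 1 n).filter (fun k => d ∣ k)).card = n / d := by
  have h : Icc 1 n = Ioc 0 n := by ext x; simp; omega
  rw [h]
  exact Nat.Ioc_filter_dvd_card_eq_div n d


def chi (D : Finset ℕ) (v : ℕ) : ℤ := if v ∈ D then 1 else 0

lemma chi_cases (D : Finset ℕ) (v : ℕ) : chi D v = 0 ∨ chi D v = 1 := by
  unfold chi; split <;> simp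

lemma factorization_pmp (r s : ℕ) (hr : r.Prime) (hs : s.Prime) (hrs : r ≠ s) (i w : ℕ) :
    (r^i * s^w).factorization r = i ∧ (r^i * s^w).factorization s = w := by
  have h1 : (r^i * s^w).factorization = i • r.factorization + w • s.factorization := by
    rw [Nat.factorization_mul (pow_ne_zero i hr.pos.ne') (pow_ne_zero w hs.pos.ne'),
        Nat.factorization_pow, Nat.factorization_pow]
  rw [h1]
  simp [hr.factorization, hs.factorization, Finsupp.single_apply, hrs, Ne.symm hrs]

lemma divisor_decomp_s7 (r s : ℕ) (hr : r.Prime) (hs : s.Prime) (hrs : r ≠ s) (d : ℕ)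
    (hd : d ∣ r^2 * s^2) : ∃ i, i ≤ 2 ∧ ∃ w, w ≤ 2 ∧ d = r^i * s^w := by
  have hcop : Nat.Coprime (r^2) (s^2) := ((Nat.coprime_primes hr hs).mpr hrs).pow 2 2
  have hdecomp := (Nat.gcd_mul_gcd_eq_iff_dvd_mul_of_coprime hcop).mpr hd
  obtain ⟨i, hi, hig⟩ := (Nat.dvd_prime_pow hr).mp (Nat.gcd_dvd_right d (r^2))
  obtain ⟨w, hw, hwg⟩ := (Nat.dvd_prime_pow hs).mp (Nat.gcd_dvd_right d (s^2))
  exact ⟨i, hi, w, hw, by rw [← hdecomp, hig, hwg]⟩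

lemma Lz_expand (r s : ℕ) (hr : r.Prime) (hs : s.Prime) (hrs : r ≠ s)
    (n : ℕ) (hn : n = r^2 * s^2) (D : Finset ℕ) (hD : D ⊆ n.divisors) (g : ℕ) :
    Lz n D g = ∑ i ∈ range 3, ∑ w ∈ range 3,
      chi D (r^i * s^w) * (RS (r^(2-i)) g * RS (s^(2-w)) g) := by
  have hr0 : r ≠ 0 := hr.pos.ne'
  have hs0 : s ≠ 0 := hs.pos.ne'
  have hn0 : n ≠ 0 := by rw [hn]; positivity
  have hstep : Lz n D g = ∑ d ∈ n.divisors, chi D d * RS (n/d) g := by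
    unfold Lz
    calc ∑ d ∈ D, RS (n/d) g = ∑ d ∈ D, chi D d * RS (n/d) g := by
          apply Finset.sum_congr rfl
          intro d hd
          rw [chi, if_pos hd, one_mul]
      _ = ∑ d ∈ n.divisors, chi D d * RS (n/d) g :=
          Finset.sum_subset hD (fun x _ hx => by rw [chi, if_neg hx, zero_mul])
  rw [hstep, ← Finset.sum_product']
  refine Finset.sum_nbij' (i := fun d => (d.factorization r, d.factorization s))
    (j := fun iw => r^iw.1 * s^iw.2) ?_ ?_ ?_ ?_ ?_
  · intro d hd
    obtain ⟨hdvd, -⟩ := Nat.mem_divisors.mp hd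
    obtain ⟨i, hi, w, hw, rfl⟩ := divisor_decomp_s7 r s hr hs hrs d (hn ▸ hdvd)
    obtain ⟨h1, h2⟩ := factorization_pmp r s hr hs hrs i w
    rw [h1, h2]
    simp only [Finset.mem_product, Finset.mem_range]
    omega
  · intro iw hiw
    simp only [Finset.mem_product, Finset.mem_range] at hiw
    rw [Nat.mem_divisors]
    refine ⟨?_, hn0⟩
    rw [hn]
    exact mul_dvd_mul (pow_dvd_pow r (by omega)) (pow_dvd_pow s (by omega))
  · intro d hd
    obtain ⟨hdvd, -⟩ := Nat.mem_divisors.mp hd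
    obtain ⟨i, hi, w, hw, rfl⟩ := divisor_decomp_s7 r s hr hs hrs d (hn ▸ hdvd)
    obtain ⟨h1, h2⟩ := factorization_pmp r s hr hs hrs i w
    dsimp only
    rw [h1, h2]
  · intro iw hiw
    obtain ⟨h1, h2⟩ := factorization_pmp r s hr hs hrs iw.1 iw.2
    rw [h1, h2]
  · intro d hd
    obtain ⟨hdvd, -⟩ := Nat.mem_divisors.mp hd
    obtain ⟨i, hi, w, hw, rfl⟩ := divisor_decomp_s7 r s hr hs hrs d (hn ▸ hdvd)
    obtain ⟨h1, h2⟩ := factorization_pmp r s hr hs hrs i w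
    dsimp only
    rw [h1, h2]
    have hd0 : r^i * s^w ≠ 0 := by positivity
    have hndiv : n / (r^i * s^w) = r^(2-i) * s^(2-w) := by
      have hsplit : n = (r^i * s^w) * (r^(2-i) * s^(2-w)) := by
        rw [hn]
        have e1 : r^i * r^(2-i) = r^2 := by rw [← pow_add]; congr 1; omega
        have e2 : s^w * s^(2-w) = s^2 := by rw [← pow_add]; congr 1; omega
        calc r^2 * s^2 = (r^i * r^(2-i)) * (s^w * s^(2-w)) := by rw [e1, e2]
          _ = (r^i * s^w) * (r^(2-i) * s^(2-w)) := by ring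
      rw [hsplit, Nat.mul_div_cancel_left _ (Nat.pos_of_ne_zero hd0)]
    rw [hndiv, RS_mul _ _ g (((Nat.coprime_primes hr hs).mpr hrs).pow (2-i) (2-w))]

lemma Lz_group (r s : ℕ) (hr : r.Prime) (hs : s.Prime) (hrs : r ≠ s)
    (n : ℕ) (hn : n = r^2 * s^2) (D : Finset ℕ) (hD : D ⊆ n.divisors) (g : ℕ) :
    Lz n D g =
      RS (s^2) g * (chi D 1 * RS (r^2) g + chi D r * RS r g + chi D (r^2))
    + RS s g * (chi D s * RS (r^2) g + chi D (r*s) * RS r g + chi D (r^2*s))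
    + (chi D (s^2) * RS (r^2) g + chi D (r*s^2) * RS r g + chi D (r^2*s^2)) := by
  rw [Lz_expand r s hr hs hrs n hn D hD g]
  simp only [Finset.sum_range_succ, Finset.sum_range_zero]
  norm_num [RS_one]
  ring


lemma int_zero_of_dvd_small (r : ℕ) (hr3 : 3 ≤ r) (x : ℤ) (hx1 : -2 ≤ x) (hx2 : x ≤ 2)
    (h : (r : ℤ) ∣ x) : x = 0 := by
  by_contra hx0
  have habs : (r : ℤ) ≤ |x| := Int.le_of_dvd (abs_pos.mpr hx0) ((dvd_abs _ _).mpr h)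
  have : |x| ≤ 2 := abs_le.mpr ⟨hx1, hx2⟩
  omega

lemma cop_cancel (r s : ℕ) (hr : r.Prime) (hs : s.Prime) (hrs : r ≠ s) (e c : ℕ) (x : ℤ)
    (h : ((r : ℤ))^e ∣ (s : ℤ)^c * x) : ((r : ℤ))^e ∣ x := by
  have hcop : Nat.Coprime (r^e) (s^c) := ((Nat.coprime_primes hr hs).mpr hrs).pow e c
  have hic : IsCoprime ((r : ℤ)^e) ((s : ℤ)^c) := by
    have := Nat.isCoprime_iff_coprime.mpr hcop
    push_cast at this
    exact this
  exact hic.dvd_of_dvd_mul_left h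

lemma not_prime_dvd_pow (r s : ℕ) (hr : r.Prime) (hs : s.Prime) (hrs : r ≠ s) (b : ℕ) :
    ¬ r ∣ s^b := fun hdvd =>
  hrs ((Nat.prime_dvd_prime_iff_eq hr hs).mp (hr.dvd_of_dvd_pow hdvd))

lemma RS_r2_at_spow (r s : ℕ) (hr : r.Prime) (hs : s.Prime) (hrs : r ≠ s) (b : ℕ) :
    RS (r^2) (s^b) = 0 := by
  rw [RS_prime_sq r _ hr]
  rw [if_neg (fun h => not_prime_dvd_pow r s hr hs hrs b ((dvd_pow_self r two_ne_zero).trans h)),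
      if_neg (not_prime_dvd_pow r s hr hs hrs b)]
  ring

lemma RS_r_at_spow (r s : ℕ) (hr : r.Prime) (hs : s.Prime) (hrs : r ≠ s) (b : ℕ) :
    RS r (s^b) = -1 := by
  rw [RS_prime r _ hr, if_neg (not_prime_dvd_pow r s hr hs hrs b)]
  ring

lemma master1 (r s : ℕ) (hr : r.Prime) (hs : s.Prime) (hr3 : 3 ≤ r) (hs3 : 3 ≤ s) (hrs : r ≠ s)
    (n : ℕ) (hn : n = r^2 * s^2) (D₁ D₂ : Finset ℕ) (hD₁ : D₁ ⊆ n.divisors) (hD₂ : D₂ ⊆ n.divisors)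
    (hMz : Mz n D₁ = Mz n D₂) :
    ∀ w, w ≤ 2 →
      chi D₁ (r^2 * s^w) - chi D₂ (r^2 * s^w) = chi D₁ (r * s^w) - chi D₂ (r * s^w) := by
  have hs1 : 1 < s := hs.one_lt
  have hr1 : 1 < r := hr.one_lt
  have hn0 : n ≠ 0 := by rw [hn]; positivity
  have hcong : ∀ (D : Finset ℕ), D ⊆ n.divisors → ∀ k : ℕ,
      ((Lz n D k : ℤ) : ZMod r) = ((Lz n D (Nat.gcd k (s^2)) : ℤ) : ZMod r) := by
    intro D hD k
    unfold Lz
    rw [Int.cast_sum, Int.cast_sum]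
    apply Finset.sum_congr rfl
    intro d hd
    obtain ⟨hdn, -⟩ := Nat.mem_divisors.mp (hD hd)
    have hmd : n / d ∣ n := ⟨d, (Nat.div_mul_cancel hdn).symm⟩
    refine RS_mod_gen r (s^2) (n/d) k n hmd ?_
    intro w' hw' hnd
    have := dvd_reduce r s hr hs hrs 1 w' (hn ▸ hw') (by rwa [pow_one])
    simpa using this
  -- cardinalities
  have hcard : (Icc 1 n).card = n := by rw [Nat.card_Icc]; omega
  have hns : n / s = r^2 * s := by
    rw [hn, show r^2 * s^2 = (r^2 * s) * s by ring]
    exact Nat.mul_div_cancel _ (by omega)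
  have hns2 : n / s^2 = r^2 := by
    rw [hn]
    exact Nat.mul_div_cancel _ (by positivity)
  -- the partition
  have hpart : ∀ (D : Finset ℕ), D ⊆ n.divisors →
      (Mz n D).map (fun z : ℤ => (z : ZMod r))
      = Multiset.replicate (n - n / s) ((Lz n D 1 : ℤ) : ZMod r)
      + Multiset.replicate (n / s - n / s^2) ((Lz n D s : ℤ) : ZMod r)
      + Multiset.replicate (n / s^2) ((Lz n D (s^2) : ℤ) : ZMod r) := by
    intro D hD
    unfold Mz
    rw [Multiset.map_map, Function.comp_def]
    rw [Multiset.map_congr rfl (fun k _ => hcong D hD k)]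
    rw [map_split (Icc 1 n) (fun k => s ∣ k)]
    have hA : (((Icc 1 n).filter (fun k => ¬ s ∣ k)).val.map
          (fun k => ((Lz n D (Nat.gcd k (s^2)) : ℤ) : ZMod r)))
        = Multiset.replicate (n - n / s) ((Lz n D 1 : ℤ) : ZMod r) := by
      rw [map_const_on _ _ ((Lz n D 1 : ℤ) : ZMod r)
        (fun k hk => by rw [gcd_sq_of_not_dvd k s hs (Finset.mem_filter.mp hk).2])]
      congr 1
      have h1 := Finset.card_filter_add_card_filter_not
        (s := Icc 1 n) (p := fun k => s ∣ k)
      rw [card_Icc_filter_dvd, hcard] at h1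
      omega
    have hsub : ((Icc 1 n).filter (fun k => s ∣ k)).filter (fun k => s^2 ∣ k)
        = (Icc 1 n).filter (fun k => s^2 ∣ k) := by
      rw [Finset.filter_filter]
      apply Finset.filter_congr
      intro k _
      constructor
      · rintro ⟨-, h⟩; exact h
      · intro h; exact ⟨(dvd_pow_self s two_ne_zero).trans h, h⟩
    have hB : ((((Icc 1 n).filter (fun k => s ∣ k)).filter (fun k => s^2 ∣ k)).val.map
          (fun k => ((Lz n D (Nat.gcd k (s^2)) : ℤ) : ZMod r)))
        = Multiset.replicate (n / s^2) ((Lz n D (s^2) : ℤ) : ZMod r) := by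
      rw [map_const_on _ _ ((Lz n D (s^2) : ℤ) : ZMod r)
        (fun k hk => by
          rw [gcd_sq_of_sq_dvd k s (Finset.mem_filter.mp hk).2])]
      congr 1
      rw [hsub, card_Icc_filter_dvd]
    have hC : ((((Icc 1 n).filter (fun k => s ∣ k)).filter (fun k => ¬ s^2 ∣ k)).val.map
          (fun k => ((Lz n D (Nat.gcd k (s^2)) : ℤ) : ZMod r)))
        = Multiset.replicate (n / s - n / s^2) ((Lz n D s : ℤ) : ZMod r) := by
      rw [map_const_on _ _ ((Lz n D s : ℤ) : ZMod r)
        (fun k hk => by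
          have hk' := Finset.mem_filter.mp hk
          have hk'' := Finset.mem_filter.mp hk'.1
          rw [gcd_sq_of_dvd_not k s hs hk''.2 hk'.2])]
      congr 1
      have h1 := Finset.card_filter_add_card_filter_not
        (s := (Icc 1 n).filter (fun k => s ∣ k)) (p := fun k => s^2 ∣ k)
      rw [hsub, card_Icc_filter_dvd, card_Icc_filter_dvd] at h1
      omega
    rw [map_split ((Icc 1 n).filter (fun k => s ∣ k)) (fun k => s^2 ∣ k), hA, hB, hC]
    -- reorder
    abel
  have hkey := congrArg (Multiset.map (fun z : ℤ => (z : ZMod r))) hMz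
  rw [hpart D₁ hD₁, hpart D₂ hD₂] at hkey
  have hc2pos : 0 < n / s^2 := by rw [hns2]; positivity
  have hc21 : n / s^2 < n / s - n / s^2 := by
    rw [hns2, hns]
    have h3 : r^2 * 3 ≤ r^2 * s := Nat.mul_le_mul_left _ hs3
    omega
  have hc10 : (n / s - n / s^2) + n / s^2 < n - n / s := by
    rw [hns2, hns]
    have h3 : r^2 * 3 ≤ r^2 * s := Nat.mul_le_mul_left _ hs3
    have h4 : (r^2 * s) * 3 ≤ (r^2 * s) * s := Nat.mul_le_mul_left _ hs3
    have h5 : n = (r^2 * s) * s := by rw [hn]; ring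
    omega
  obtain ⟨e0, e1, e2⟩ := tri_replicate hc2pos hc21 hc10 hkey
  -- convert to dvd facts
  have hd0 : (r : ℤ) ∣ (Lz n D₁ (s^0) - Lz n D₂ (s^0)) := by
    rw [pow_zero]
    exact Int.ModEq.dvd ((ZMod.intCast_eq_intCast_iff _ _ _).mp e0).symm
  have hd1 : (r : ℤ) ∣ (Lz n D₁ (s^1) - Lz n D₂ (s^1)) := by
    rw [pow_one]
    exact Int.ModEq.dvd ((ZMod.intCast_eq_intCast_iff _ _ _).mp e1).symm
  have hd2 : (r : ℤ) ∣ (Lz n D₁ (s^2) - Lz n D₂ (s^2)) :=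
    Int.ModEq.dvd ((ZMod.intCast_eq_intCast_iff _ _ _).mp e2).symm
  -- the group values
  set u0 : ℤ := (chi D₁ (r^2) - chi D₂ (r^2)) - (chi D₁ r - chi D₂ r) with hu0def
  set u1 : ℤ := (chi D₁ (r^2*s) - chi D₂ (r^2*s)) - (chi D₁ (r*s) - chi D₂ (r*s)) with hu1def
  set u2 : ℤ := (chi D₁ (r^2*s^2) - chi D₂ (r^2*s^2)) - (chi D₁ (r*s^2) - chi D₂ (r*s^2))
    with hu2def
  have hval : ∀ b : ℕ, Lz n D₁ (s^b) - Lz n D₂ (s^b)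
      = RS (s^2) (s^b) * u0 + RS s (s^b) * u1 + u2 := by
    intro b
    rw [Lz_group r s hr hs hrs n hn D₁ hD₁ (s^b), Lz_group r s hr hs hrs n hn D₂ hD₂ (s^b)]
    rw [RS_r2_at_spow r s hr hs hrs b, RS_r_at_spow r s hr hs hrs b]
    rw [hu0def, hu1def, hu2def]
    ring
  -- RS values at 1, s, s^2
  have hs2_1 : RS (s^2) 1 = 0 := by
    rw [RS_prime_sq s _ hs]
    rw [if_neg (fun h => by have := Nat.le_of_dvd one_pos h; nlinarith),
        if_neg (fun h => by have := Nat.le_of_dvd one_pos h; omega)]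
    ring
  have hs_1 : RS s 1 = -1 := by
    rw [RS_prime s _ hs, if_neg (fun h => by have := Nat.le_of_dvd one_pos h; omega)]
    ring
  have hs2_s : RS (s^2) s = -(s:ℤ) := by
    rw [RS_prime_sq s _ hs]
    rw [if_neg (fun h => by have := Nat.le_of_dvd (by omega) h; nlinarith),
        if_pos dvd_rfl]
    ring
  have hs_s : RS s s = (s:ℤ) - 1 := by
    rw [RS_prime s _ hs, if_pos dvd_rfl]
  have hs2_s2 : RS (s^2) (s^2) = ((s^2 : ℕ) : ℤ) - (s:ℤ) := by
    rw [RS_prime_sq s _ hs, if_pos dvd_rfl, if_pos (dvd_pow_self s two_ne_zero)]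
  have hs_s2 : RS s (s^2) = (s:ℤ) - 1 := by
    rw [RS_prime s _ hs, if_pos (dvd_pow_self s two_ne_zero)]
  rw [hval 0, pow_zero, hs2_1, hs_1] at hd0
  rw [hval 1, pow_one, hs2_s, hs_s] at hd1
  rw [hval 2, hs2_s2, hs_s2] at hd2
  -- bounds
  have hbound : ∀ v : ℕ, 0 ≤ chi D₁ v ∧ chi D₁ v ≤ 1 ∧ 0 ≤ chi D₂ v ∧ chi D₂ v ≤ 1 := by
    intro v
    rcases chi_cases D₁ v with h | h <;> rcases chi_cases D₂ v with h' | h' <;>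
      rw [h, h'] <;> norm_num
  have hb1 := hbound (r^2)
  have hb2 := hbound r
  have hb3 := hbound (r^2*s)
  have hb4 := hbound (r*s)
  have hb5 := hbound (r^2*s^2)
  have hb6 := hbound (r*s^2)
  -- eliminations
  have hu0z : u0 = 0 := by
    have h20 : (r:ℤ)^1 ∣ (s:ℤ)^2 * u0 := by
      rw [pow_one]
      obtain ⟨c, hc⟩ := dvd_sub hd2 hd1
      push_cast at hc
      exact ⟨c, by linear_combination hc⟩
    have h1 : (r:ℤ) ∣ u0 := by
      have := cop_cancel r s hr hs hrs 1 2 u0 h20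
      rwa [pow_one] at this
    exact int_zero_of_dvd_small r hr3 u0 (by omega) (by omega) h1
  have hu1z : u1 = 0 := by
    have h10 : (r:ℤ)^1 ∣ (s:ℤ)^1 * u1 := by
      rw [pow_one, pow_one]
      obtain ⟨c, hc⟩ := dvd_sub hd1 hd0
      push_cast at hc
      exact ⟨c, by linear_combination hc + (s:ℤ) * hu0z⟩
    have h1 : (r:ℤ) ∣ u1 := by
      have := cop_cancel r s hr hs hrs 1 1 u1 h10
      rwa [pow_one] at this
    exact int_zero_of_dvd_small r hr3 u1 (by omega) (by omega) h1
  have hu2z : u2 = 0 := by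
    have h1 : (r:ℤ) ∣ u2 := by
      obtain ⟨c, hc⟩ := hd0
      push_cast at hc
      exact ⟨c, by linear_combination hc + hu1z⟩
    exact int_zero_of_dvd_small r hr3 u2 (by omega) (by omega) h1
  intro w hw
  interval_cases w
  · simp only [pow_zero, mul_one]
    omega
  · simp only [pow_one]
    omega
  · omega


lemma master2 (r s : ℕ) (hr : r.Prime) (hs : s.Prime) (hr3 : 3 ≤ r) (hs3 : 3 ≤ s) (hrs : r ≠ s)
    (n : ℕ) (hn : n = r^2 * s^2) (D₁ D₂ : Finset ℕ) (hD₁ : D₁ ⊆ n.divisors) (hD₂ : D₂ ⊆ n.divisors)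
    (hMz : Mz n D₁ = Mz n D₂) :
    ∀ w, w ≤ 2 →
      chi D₁ (r * s^w) - chi D₂ (r * s^w) = chi D₁ (s^w) - chi D₂ (s^w) := by
  have hs1 : 1 < s := hs.one_lt
  have hr1 : 1 < r := hr.one_lt
  have hn0 : n ≠ 0 := by rw [hn]; positivity
  have hm1 := master1 r s hr hs hr3 hs3 hrs n hn D₁ D₂ hD₁ hD₂ hMz
  have hcoprs2 : Nat.Coprime r (s^2) := Nat.Coprime.pow_right 2 ((Nat.coprime_primes hr hs).mpr hrs)
  -- u values from master1 are zero
  have hu0z : (chi D₁ (r^2) - chi D₂ (r^2)) - (chi D₁ r - chi D₂ r) = 0 := by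
    have := hm1 0 (by omega)
    simp only [pow_zero, mul_one] at this
    omega
  have hu1z : (chi D₁ (r^2*s) - chi D₂ (r^2*s)) - (chi D₁ (r*s) - chi D₂ (r*s)) = 0 := by
    have := hm1 1 (by omega)
    simp only [pow_one] at this
    omega
  have hu2z : (chi D₁ (r^2*s^2) - chi D₂ (r^2*s^2)) - (chi D₁ (r*s^2) - chi D₂ (r*s^2)) = 0 := by
    have := hm1 2 (by omega)
    omega
  -- Lz values at s^b agree exactly
  have hNval : ∀ w : ℕ, w ≤ 2 → Lz n D₁ (s^w) = Lz n D₂ (s^w) := by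
    intro w hw
    have hdiff : Lz n D₁ (s^w) - Lz n D₂ (s^w) = 0 := by
      rw [Lz_group r s hr hs hrs n hn D₁ hD₁ (s^w), Lz_group r s hr hs hrs n hn D₂ hD₂ (s^w)]
      rw [RS_r2_at_spow r s hr hs hrs w, RS_r_at_spow r s hr hs hrs w]
      linear_combination (RS (s^2) (s^w)) * hu0z + (RS s (s^w)) * hu1z + hu2z
    omega
  -- congruence mod r^2
  have hcong : ∀ (D : Finset ℕ), D ⊆ n.divisors → ∀ k : ℕ,
      ((Lz n D k : ℤ) : ZMod (r^2)) = ((Lz n D (Nat.gcd k (r * s^2)) : ℤ) : ZMod (r^2)) := by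
    intro D hD k
    unfold Lz
    rw [Int.cast_sum, Int.cast_sum]
    apply Finset.sum_congr rfl
    intro d hd
    obtain ⟨hdn, -⟩ := Nat.mem_divisors.mp (hD hd)
    have hmd : n / d ∣ n := ⟨d, (Nat.div_mul_cancel hdn).symm⟩
    refine RS_mod_gen (r^2) (r * s^2) (n/d) k n hmd ?_
    intro w' hw' hnd
    have := dvd_reduce r s hr hs hrs 2 w' (hn ▸ hw') hnd
    rwa [show (2:ℕ) - 1 = 1 by omega, pow_one] at this
  -- cardinalities
  have hcard : (Icc 1 n).card = n := by rw [Nat.card_Icc]; omega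
  have hnr : n / r = r * s^2 := by
    rw [hn, show r^2 * s^2 = r * (r * s^2) by ring]
    exact Nat.mul_div_cancel_left _ (by omega)
  have hnrs : n / (r * s) = r * s := by
    rw [hn, show r^2 * s^2 = (r * s) * (r * s) by ring]
    exact Nat.mul_div_cancel_left _ (by positivity)
  have hnrs2 : n / (r * s^2) = r := by
    rw [hn, show r^2 * s^2 = (r * s^2) * r by ring]
    exact Nat.mul_div_cancel_left _ (by positivity)
  -- the filter sets
  set Yset := (Icc 1 n).filter (fun k => r ∣ k) with hYset
  set Nset := (Icc 1 n).filter (fun k => ¬ r ∣ k) with hNset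
  -- gcd values on classes
  have hgcdN : ∀ k ∈ Nset, Nat.gcd k (r * s^2) = Nat.gcd k (s^2) := by
    intro k hk
    rw [gcd_mul_coprime k r (s^2) hcoprs2,
      gcd_prime_of_not_dvd k r hr (Finset.mem_filter.mp hk).2, one_mul]
  -- N parts agree
  have hNeq : Nset.val.map (fun k => ((Lz n D₁ (Nat.gcd k (r * s^2)) : ℤ) : ZMod (r^2)))
      = Nset.val.map (fun k => ((Lz n D₂ (Nat.gcd k (r * s^2)) : ℤ) : ZMod (r^2))) := by
    apply Multiset.map_congr rfl
    intro k hk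
    rw [hgcdN k hk]
    obtain ⟨w, hw, hgw⟩ := (Nat.dvd_prime_pow hs).mp (Nat.gcd_dvd_right k (s^2))
    rw [hgw, hNval w hw]
  -- partition of the map
  have hpartY : ∀ (D : Finset ℕ), D ⊆ n.divisors →
      Yset.val.map (fun k => ((Lz n D (Nat.gcd k (r * s^2)) : ℤ) : ZMod (r^2)))
      = Multiset.replicate (n / r - n / (r*s)) ((Lz n D r : ℤ) : ZMod (r^2))
      + Multiset.replicate (n / (r*s) - n / (r*s^2)) ((Lz n D (r*s) : ℤ) : ZMod (r^2))
      + Multiset.replicate (n / (r*s^2)) ((Lz n D (r*s^2) : ℤ) : ZMod (r^2)) := by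
    intro D hD
    have hYs : Yset.filter (fun k => s ∣ k) = (Icc 1 n).filter (fun k => (r*s) ∣ k) := by
      rw [hYset, Finset.filter_filter]
      apply Finset.filter_congr
      intro k _
      constructor
      · rintro ⟨h1, h2⟩
        exact Nat.Coprime.mul_dvd_of_dvd_of_dvd ((Nat.coprime_primes hr hs).mpr hrs) h1 h2
      · intro h
        exact ⟨(dvd_mul_right r s).trans h, (dvd_mul_left s r).trans h⟩
    have hYss : (Yset.filter (fun k => s ∣ k)).filter (fun k => s^2 ∣ k)
        = (Icc 1 n).filter (fun k => (r*s^2) ∣ k) := by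
      rw [hYs, Finset.filter_filter]
      apply Finset.filter_congr
      intro k _
      constructor
      · rintro ⟨h1, h2⟩
        have hrk : r ∣ k := (dvd_mul_right r s).trans h1
        exact Nat.Coprime.mul_dvd_of_dvd_of_dvd hcoprs2 hrk h2
      · intro h
        refine ⟨?_, (dvd_mul_left (s^2) r).trans h⟩
        exact (mul_dvd_mul_left r (dvd_pow_self s two_ne_zero)).trans h
    -- values on classes
    have hvYns : ∀ k ∈ Yset.filter (fun k => ¬ s ∣ k), Nat.gcd k (r*s^2) = r := by
      intro k hk
      obtain ⟨hk1, hk2⟩ := Finset.mem_filter.mp hk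
      have hrk : r ∣ k := (Finset.mem_filter.mp hk1).2
      rw [gcd_mul_coprime k r (s^2) hcoprs2, gcd_prime_of_dvd k r hrk,
        gcd_sq_of_not_dvd k s hs hk2, mul_one]
    have hvYsns : ∀ k ∈ (Yset.filter (fun k => s ∣ k)).filter (fun k => ¬ s^2 ∣ k),
        Nat.gcd k (r*s^2) = r * s := by
      intro k hk
      obtain ⟨hk1, hk2⟩ := Finset.mem_filter.mp hk
      obtain ⟨hk3, hk4⟩ := Finset.mem_filter.mp hk1
      have hrk : r ∣ k := (Finset.mem_filter.mp hk3).2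
      rw [gcd_mul_coprime k r (s^2) hcoprs2, gcd_prime_of_dvd k r hrk,
        gcd_sq_of_dvd_not k s hs hk4 hk2]
    have hvYss : ∀ k ∈ (Yset.filter (fun k => s ∣ k)).filter (fun k => s^2 ∣ k),
        Nat.gcd k (r*s^2) = r * s^2 := by
      intro k hk
      obtain ⟨hk1, hk2⟩ := Finset.mem_filter.mp hk
      obtain ⟨hk3, hk4⟩ := Finset.mem_filter.mp hk1
      have hrk : r ∣ k := (Finset.mem_filter.mp hk3).2
      rw [gcd_mul_coprime k r (s^2) hcoprs2, gcd_prime_of_dvd k r hrk,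
        gcd_sq_of_sq_dvd k s hk2]
    rw [map_split Yset (fun k => s ∣ k)]
    rw [map_split (Yset.filter (fun k => s ∣ k)) (fun k => s^2 ∣ k)]
    rw [map_const_on (Yset.filter (fun k => ¬ s ∣ k)) _ ((Lz n D r : ℤ) : ZMod (r^2))
          (fun k hk => by rw [hvYns k hk]),
        map_const_on ((Yset.filter (fun k => s ∣ k)).filter (fun k => ¬ s^2 ∣ k)) _
          ((Lz n D (r*s) : ℤ) : ZMod (r^2)) (fun k hk => by rw [hvYsns k hk]),
        map_const_on ((Yset.filter (fun k => s ∣ k)).filter (fun k => s^2 ∣ k)) _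
          ((Lz n D (r*s^2) : ℤ) : ZMod (r^2)) (fun k hk => by rw [hvYss k hk])]
    -- cards
    have hcY : Yset.card = n / r := by rw [hYset]; exact card_Icc_filter_dvd n r
    have hcYs : (Yset.filter (fun k => s ∣ k)).card = n / (r*s) := by
      rw [hYs]; exact card_Icc_filter_dvd n (r*s)
    have hcYss : ((Yset.filter (fun k => s ∣ k)).filter (fun k => s^2 ∣ k)).card
        = n / (r*s^2) := by
      rw [hYss]; exact card_Icc_filter_dvd n (r*s^2)
    have hcYsns : ((Yset.filter (fun k => s ∣ k)).filter (fun k => ¬ s^2 ∣ k)).card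
        = n / (r*s) - n / (r*s^2) := by
      have h1 := Finset.card_filter_add_card_filter_not
        (s := Yset.filter (fun k => s ∣ k)) (p := fun k => s^2 ∣ k)
      rw [hcYss, hcYs] at h1
      omega
    have hcYns : (Yset.filter (fun k => ¬ s ∣ k)).card = n / r - n / (r*s) := by
      have h1 := Finset.card_filter_add_card_filter_not
        (s := Yset) (p := fun k => s ∣ k)
      rw [hcYs, hcY] at h1
      omega
    rw [hcYss, hcYsns, hcYns]
    abel
  -- main equality and cancellation
  have hsplitM : ∀ (D : Finset ℕ), D ⊆ n.divisors →
      (Mz n D).map (fun z : ℤ => (z : ZMod (r^2)))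
      = Yset.val.map (fun k => ((Lz n D (Nat.gcd k (r * s^2)) : ℤ) : ZMod (r^2)))
      + Nset.val.map (fun k => ((Lz n D (Nat.gcd k (r * s^2)) : ℤ) : ZMod (r^2))) := by
    intro D hD
    unfold Mz
    rw [Multiset.map_map, Function.comp_def]
    rw [Multiset.map_congr rfl (fun k _ => hcong D hD k)]
    exact map_split (Icc 1 n) (fun k => r ∣ k) _
  have hkey := congrArg (Multiset.map (fun z : ℤ => (z : ZMod (r^2)))) hMz
  rw [hsplitM D₁ hD₁, hsplitM D₂ hD₂, hNeq] at hkey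
  have hY := add_right_cancel hkey
  rw [hpartY D₁ hD₁, hpartY D₂ hD₂] at hY
  -- counting inequalities
  have h3 : r * 3 ≤ r * s := Nat.mul_le_mul_left _ hs3
  have h4 : (r*s) * 3 ≤ (r*s) * s := Nat.mul_le_mul_left _ hs3
  have h5 : r * s^2 = (r*s) * s := by ring
  have hc2pos : 0 < n / (r*s^2) := by rw [hnrs2]; omega
  have hc21 : n / (r*s^2) < n / (r*s) - n / (r*s^2) := by
    rw [hnrs2, hnrs]; omega
  have hc10 : (n / (r*s) - n / (r*s^2)) + n / (r*s^2) < n / r - n / (r*s) := by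
    rw [hnrs2, hnrs, hnr, h5]; omega
  obtain ⟨e0, e1, e2⟩ := tri_replicate hc2pos hc21 hc10 hY
  -- dvd facts
  have hdd : ∀ x y : ℤ, ((x : ZMod (r^2)) = (y : ZMod (r^2))) → ((r:ℤ))^2 ∣ (x - y) := by
    intro x y hxy
    have := Int.ModEq.dvd ((ZMod.intCast_eq_intCast_iff _ _ _).mp hxy).symm
    have hcast : ((r^2 : ℕ) : ℤ) = (r:ℤ)^2 := by push_cast; ring
    rwa [hcast] at this
  have hd0 := hdd _ _ e0
  have hd1 := hdd _ _ e1
  have hd2 := hdd _ _ e2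
  -- RS values at r * s^b
  have hrdvd : ∀ b : ℕ, r ∣ r * s^b := fun b => dvd_mul_right r (s^b)
  have hr2ndvd : ∀ b : ℕ, ¬ r^2 ∣ r * s^b := by
    intro b h
    rw [pow_two] at h
    have : r ∣ s^b := (Nat.mul_dvd_mul_iff_left (show 0 < r by omega)).mp h
    exact not_prime_dvd_pow r s hr hs hrs b this
  have hRr2 : ∀ b : ℕ, RS (r^2) (r * s^b) = -(r:ℤ) := by
    intro b
    rw [RS_prime_sq r _ hr, if_neg (hr2ndvd b), if_pos (hrdvd b)]
    ring
  have hRr : ∀ b : ℕ, RS r (r * s^b) = (r:ℤ) - 1 := by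
    intro b; rw [RS_prime r _ hr, if_pos (hrdvd b)]
  have hstrans : ∀ c b : ℕ, (s^c ∣ r * s^b) ↔ (s^c ∣ s^b) := by
    intro c b
    constructor
    · intro h
      exact Nat.Coprime.dvd_of_dvd_mul_left
        (Nat.Coprime.pow_left c (((Nat.coprime_primes hs hr).mpr (Ne.symm hrs)))) h
    · intro h
      exact h.mul_left r
  have hstrans1 : ∀ b : ℕ, (s ∣ r * s^b) ↔ (s ∣ s^b) := by
    intro b
    have := hstrans 1 b
    rwa [pow_one] at this
  have hRS2trans : ∀ b : ℕ, RS (s^2) (r*s^b) = RS (s^2) (s^b) := by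
    intro b
    rw [RS_prime_sq s _ hs, RS_prime_sq s _ hs,
      if_congr (hstrans 2 b) rfl rfl, if_congr (hstrans1 b) rfl rfl]
  have hRStrans : ∀ b : ℕ, RS s (r*s^b) = RS s (s^b) := by
    intro b
    rw [RS_prime s _ hs, RS_prime s _ hs, if_congr (hstrans1 b) rfl rfl]
  -- RS values at 1, s, s^2
  have hs2_1 : RS (s^2) 1 = 0 := by
    rw [RS_prime_sq s _ hs]
    rw [if_neg (fun h => by have := Nat.le_of_dvd one_pos h; nlinarith),
        if_neg (fun h => by have := Nat.le_of_dvd one_pos h; omega)]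
    ring
  have hs_1 : RS s 1 = -1 := by
    rw [RS_prime s _ hs, if_neg (fun h => by have := Nat.le_of_dvd one_pos h; omega)]
    ring
  have hs2_s : RS (s^2) s = -(s:ℤ) := by
    rw [RS_prime_sq s _ hs]
    rw [if_neg (fun h => by have := Nat.le_of_dvd (by omega) h; nlinarith),
        if_pos dvd_rfl]
    ring
  have hs_s : RS s s = (s:ℤ) - 1 := by
    rw [RS_prime s _ hs, if_pos dvd_rfl]
  have hs2_s2 : RS (s^2) (s^2) = ((s^2 : ℕ) : ℤ) - (s:ℤ) := by
    rw [RS_prime_sq s _ hs, if_pos dvd_rfl, if_pos (dvd_pow_self s two_ne_zero)]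
  have hs_s2 : RS s (s^2) = (s:ℤ) - 1 := by
    rw [RS_prime s _ hs, if_pos (dvd_pow_self s two_ne_zero)]
  -- the group value decomposition
  set v0 : ℤ := (chi D₁ r - chi D₂ r) - (chi D₁ 1 - chi D₂ 1) with hv0def
  set v1 : ℤ := (chi D₁ (r*s) - chi D₂ (r*s)) - (chi D₁ s - chi D₂ s) with hv1def
  set v2 : ℤ := (chi D₁ (r*s^2) - chi D₂ (r*s^2)) - (chi D₁ (s^2) - chi D₂ (s^2)) with hv2def
  have hval : ∀ b : ℕ, Lz n D₁ (r * s^b) - Lz n D₂ (r * s^b)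
      = RS (s^2) (s^b) * ((r:ℤ) * v0) + RS s (s^b) * ((r:ℤ) * v1) + ((r:ℤ) * v2) := by
    intro b
    rw [Lz_group r s hr hs hrs n hn D₁ hD₁ (r*s^b), Lz_group r s hr hs hrs n hn D₂ hD₂ (r*s^b)]
    rw [hRr2 b, hRr b, hRS2trans b, hRStrans b]
    rw [hv0def, hv1def, hv2def]
    linear_combination (RS (s^2) (s^b)) * hu0z + (RS s (s^b)) * hu1z + hu2z
  have hvv0 := hval 0
  rw [show r * s^0 = r by norm_num] at hvv0
  rw [pow_zero, hs2_1, hs_1] at hvv0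
  have hvv1 := hval 1
  rw [show r * s^1 = r * s by rw [pow_one]] at hvv1
  rw [pow_one, hs2_s, hs_s] at hvv1
  have hvv2 := hval 2
  rw [hs2_s2, hs_s2] at hvv2
  rw [hvv0] at hd0
  rw [hvv1] at hd1
  rw [hvv2] at hd2
  -- bounds
  have hbound : ∀ v : ℕ, 0 ≤ chi D₁ v ∧ chi D₁ v ≤ 1 ∧ 0 ≤ chi D₂ v ∧ chi D₂ v ≤ 1 := by
    intro v
    rcases chi_cases D₁ v with h | h <;> rcases chi_cases D₂ v with h' | h' <;>
      rw [h, h'] <;> norm_num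
  have hb1 := hbound 1
  have hb2 := hbound r
  have hb3 := hbound s
  have hb4 := hbound (r*s)
  have hb5 := hbound (s^2)
  have hb6 := hbound (r*s^2)
  have hrne : (r:ℤ) ≠ 0 := by positivity
  have hcancel : ∀ x : ℤ, ((r:ℤ))^2 ∣ (r:ℤ) * x → (r:ℤ) ∣ x := by
    intro x ⟨c, hc⟩
    refine ⟨c, mul_left_cancel₀ hrne ?_⟩
    linear_combination hc
  have hv0z : v0 = 0 := by
    have h20 : (r:ℤ)^2 ∣ (s:ℤ)^2 * ((r:ℤ) * v0) := by
      obtain ⟨c, hc⟩ := dvd_sub hd2 hd1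
      push_cast at hc
      exact ⟨c, by linear_combination hc⟩
    have h1 : (r:ℤ) ∣ v0 := hcancel v0 (cop_cancel r s hr hs hrs 2 2 _ h20)
    exact int_zero_of_dvd_small r hr3 v0 (by omega) (by omega) h1
  have hv1z : v1 = 0 := by
    have h10 : (r:ℤ)^2 ∣ (s:ℤ)^1 * ((r:ℤ) * v1) := by
      obtain ⟨c, hc⟩ := dvd_sub hd1 hd0
      push_cast at hc
      exact ⟨c, by linear_combination hc + (s:ℤ) * (r:ℤ) * hv0z⟩
    have h1 : (r:ℤ) ∣ v1 := hcancel v1 (cop_cancel r s hr hs hrs 2 1 _ h10)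
    exact int_zero_of_dvd_small r hr3 v1 (by omega) (by omega) h1
  have hv2z : v2 = 0 := by
    have h00 : (r:ℤ)^2 ∣ (r:ℤ) * v2 := by
      obtain ⟨c, hc⟩ := hd0
      exact ⟨c, by linear_combination hc + (r:ℤ) * hv1z⟩
    have h1 : (r:ℤ) ∣ v2 := hcancel v2 h00
    exact int_zero_of_dvd_small r hr3 v2 (by omega) (by omega) h1
  intro w hw
  interval_cases w
  · simp only [pow_zero, mul_one]
    omega
  · simp only [pow_one]
    omega
  · omega


/-- So's conjecture for `n = p² q²` with primes `3 ≤ p < q`. -/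
theorem so_p2q2
    (p q n : ℕ) (hp : p.Prime) (hq : q.Prime) (hp3 : 3 ≤ p) (hpq : p < q)
    (hn : n = p ^ 2 * q ^ 2)
    (D₁ D₂ : Finset ℕ)
    (hD₁ : D₁ ⊆ n.divisors) (hD₂ : D₂ ⊆ n.divisors)
    (hn₁ : n ∉ D₁) (hn₂ : n ∉ D₂)
    (hspec : spec n (connSet n D₁) = spec n (connSet n D₂)) :
    D₁ = D₂ := by
  have hq3 : 3 ≤ q := by omega
  have hpq' : p ≠ q := Nat.ne_of_lt hpq
  have hn0 : n ≠ 0 := by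
    rw [hn]
    have := hp.pos
    have := hq.pos
    positivity
  have hMz := Mz_eq_of_spec_eq n hn0 D₁ D₂ hD₁ hD₂ hspec
  have hn' : n = q^2 * p^2 := by rw [hn]; ring
  have hm1p := master1 p q hp hq hp3 hq3 hpq' n hn D₁ D₂ hD₁ hD₂ hMz
  have hm2p := master2 p q hp hq hp3 hq3 hpq' n hn D₁ D₂ hD₁ hD₂ hMz
  have hm1q := master1 q p hq hp hq3 hp3 (Ne.symm hpq') n hn' D₁ D₂ hD₁ hD₂ hMz
  have hm2q := master2 q p hq hp hq3 hp3 (Ne.symm hpq') n hn' D₁ D₂ hD₁ hD₂ hMz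
  have hnn : chi D₁ (p^2 * q^2) - chi D₂ (p^2 * q^2) = 0 := by
    have h1 : chi D₁ (p^2*q^2) = 0 := by
      rw [chi, if_neg]
      rw [← hn]
      exact hn₁
    have h2 : chi D₂ (p^2*q^2) = 0 := by
      rw [chi, if_neg]
      rw [← hn]
      exact hn₂
    rw [h1, h2]; ring
  have hcol : ∀ b', b' ≤ 2 → ∀ a', a' ≤ 2 →
      chi D₁ (p^a' * q^b') - chi D₂ (p^a' * q^b')
      = chi D₁ (p^2 * q^b') - chi D₂ (p^2 * q^b') := by
    intro b' hb' a' ha'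
    have h1 := hm1p b' hb'
    have h2 := hm2p b' hb'
    interval_cases a'
    · simp only [pow_zero, one_mul]
      omega
    · simp only [pow_one]
      omega
    · omega
  have hrow : ∀ b', b' ≤ 2 →
      chi D₁ (p^2 * q^b') - chi D₂ (p^2 * q^b')
      = chi D₁ (p^2 * q^2) - chi D₂ (p^2 * q^2) := by
    intro b' hb'
    have h1 := hm1q 2 (by omega)
    have h2 := hm2q 2 (by omega)
    rw [show q^2 * p^2 = p^2 * q^2 by ring] at h1
    rw [show q * p^2 = p^2 * q by ring] at h1 h2
    rw [show p^2 * q = p^2 * q^1 by rw [pow_one]] at h1 h2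
    interval_cases b'
    · simp only [pow_zero, mul_one] at *
      omega
    · omega
    · omega
  have hdc : ∀ a b : ℕ, a ≤ 2 → b ≤ 2 →
      chi D₁ (p^a * q^b) - chi D₂ (p^a * q^b) = 0 := by
    intro a b ha hb
    rw [hcol b hb a ha, hrow b hb, hnn]
  apply Finset.ext
  intro v
  have hmem : v ∈ n.divisors → (v ∈ D₁ ↔ v ∈ D₂) := by
    intro hv
    obtain ⟨hvd, -⟩ := Nat.mem_divisors.mp hv
    obtain ⟨a, ha, b, hb, rfl⟩ := divisor_decomp_s7 p q hp hq hpq' v (hn ▸ hvd)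
    have h := hdc a b ha hb
    unfold chi at h
    constructor
    · intro hin
      rw [if_pos hin] at h
      by_contra hout
      rw [if_neg hout] at h
      omega
    · intro hin
      rw [if_pos hin] at h
      by_contra hout
      rw [if_neg hout] at h
      omega
  exact ⟨fun h => (hmem (hD₁ h)).mp h, fun h => (hmem (hD₂ h)).mpr h⟩
end
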